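/- arXiv:1904.09322 — 2 statements merged into one kernel-verified Lean document; each statement's English description precedes it below -/
import Mathlib

section
/- (SqPO concurrency, synthesis, for rules without conditions.) Let C be an adhesive, balanced category with epi–mono factorizations, effective unions, a strict initial object whose morphisms out of it are monomorphisms, and in which every composable pair of monomorphisms admits a final pullback complement. Let r₁ = (O₁ ⟵o₁ K₁ ⟶i₁ I₁) and r₂ = (O₂ ⟵o₂ K₂ ⟶i₂ I₂) be linear rules. Suppose given SqPO derivations: X₁ = r₁ applied to X₀ at a monomorphism m₁ : I₁ ⟶ X₀, with comatch m₁* : O₁ ⟶ X₁, and X₂ = r₂ applied to X₁ at a monomorphism m₂ : I₂ ⟶ X₁. Let M₂₁ be a pullback of the cospan (m₂ : I₂ ⟶ X₁, m₁* : O₁ ⟶ X₁), giving a span of monomorphisms μ₂₁ = (I₂ ⟵ M₂₁ ⟶ O₁). Then: (i) the SqPO-composite rule r₂₁ = r₂ ▷μ₂₁◁ r₁ exists (in particular, the pushout complement required in its construction exists); and (ii) there exists a monomorphism m₂₁ : I₂₁ ⟶ X₀ such that the SqPO derivation of X₀ along r₂₁ at m₂₁ produces an object isomorphic to X₂. -/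
open CategoryTheory CategoryTheory.Limits

universe v u

/-- Given morphisms `a : A ⟶ B` and `c : B ⟶ C`, the pair `(d : D ⟶ C, b : A ⟶ D)` is a
*final pullback complement* of `(c, a)` if the square `a ≫ c = b ≫ d` is a pullback and
for every pullback square `x ≫ c = y ≫ z` and every `w : P ⟶ A` with `w ≫ a = x`,
there is a unique `w* : Q ⟶ D` with `w* ≫ d = z` and `y ≫ w* = w ≫ b`. -/
structure IsFinalPullbackComplement {𝒞 : Type u} [Category.{v} 𝒞] {A B C D : 𝒞}
    (a : A ⟶ B) (c : B ⟶ C) (b : A ⟶ D) (d : D ⟶ C) : Prop where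
  isPullback : CategoryTheory.IsPullback a b c d
  universal : ∀ {P Q : 𝒞} (x : P ⟶ B) (y : P ⟶ Q) (z : Q ⟶ C),
    CategoryTheory.IsPullback x y c z → ∀ (w : P ⟶ A), w ≫ a = x →
      ∃! wStar : Q ⟶ D, wStar ≫ d = z ∧ y ≫ wStar = w ≫ b

/-- A category has *epi–mono factorizations* if every morphism factors as an epimorphism
followed by a monomorphism. -/
def HasEpiMonoFactorizations (𝒞 : Type u) [Category.{v} 𝒞] : Prop :=
  ∀ {X Y : 𝒞} (f : X ⟶ Y), ∃ (E : 𝒞) (e : X ⟶ E) (m : E ⟶ Y), Epi e ∧ Mono m ∧ e ≫ m = f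

/-- A category has *effective unions* if for every pushout square of monomorphisms
and all monomorphisms `b`, `c` forming with the span legs a pullback square, the unique
mediating morphism out of the pushout is a monomorphism. -/
def HasEffectiveUnions (𝒞 : Type u) [Category.{v} 𝒞] : Prop :=
  ∀ {A B C D E : 𝒞} (b₀ : A ⟶ B) (c₀ : A ⟶ C) (e : B ⟶ D) (f : C ⟶ D)
    (b : B ⟶ E) (c : C ⟶ E) (d : D ⟶ E),
    Mono b₀ → Mono c₀ → Mono e → Mono f → Mono b → Mono c →
    IsPushout b₀ c₀ e f → IsPullback b₀ c₀ b c →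
    e ≫ d = b → f ≫ d = c → Mono d

section Helpers

variable {𝒞 : Type u} [Category.{v} 𝒞]

/-- Constructor for `IsPullback` from an explicit universal property. -/
theorem SqPO.mkIsPullback {P X Y Z : 𝒞}
    {fst : P ⟶ X} {snd : P ⟶ Y} {f : X ⟶ Z} {g : Y ⟶ Z}
    (w : fst ≫ f = snd ≫ g)
    (lift : ∀ {T : 𝒞} (p : T ⟶ X) (q : T ⟶ Y), p ≫ f = q ≫ g → (T ⟶ P))
    (hfst : ∀ {T : 𝒞} (p : T ⟶ X) (q : T ⟶ Y) (h : p ≫ f = q ≫ g), lift p q h ≫ fst = p)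
    (hsnd : ∀ {T : 𝒞} (p : T ⟶ X) (q : T ⟶ Y) (h : p ≫ f = q ≫ g), lift p q h ≫ snd = q)
    (uniq : ∀ {T : 𝒞} (α β : T ⟶ P), α ≫ fst = β ≫ fst → α ≫ snd = β ≫ snd → α = β) :
    IsPullback fst snd f g :=
  IsPullback.of_isLimit (PullbackCone.IsLimit.mk w (fun s => lift s.fst s.snd s.condition)
    (fun _ => hfst _ _ _) (fun _ => hsnd _ _ _)
    (fun s m h₁ h₂ => uniq m _ (by rw [h₁, hfst]) (by rw [h₂, hsnd])))

/-- In a pullback square the morphism opposite a mono is a mono. -/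
theorem SqPO.monoFst {P X Y Z : 𝒞} {fst : P ⟶ X} {snd : P ⟶ Y} {f : X ⟶ Z} {g : Y ⟶ Z}
    (h : IsPullback fst snd f g) (hg : Mono g) : Mono fst := by
  constructor
  intro T u v huv
  have h2 : u ≫ snd = v ≫ snd := by
    have heq : (u ≫ snd) ≫ g = (v ≫ snd) ≫ g := by
      calc (u ≫ snd) ≫ g = u ≫ snd ≫ g := by rw [Category.assoc]
        _ = u ≫ fst ≫ f := by rw [← h.w]
        _ = (u ≫ fst) ≫ f := by rw [Category.assoc]
        _ = (v ≫ fst) ≫ f := by rw [huv]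
        _ = v ≫ fst ≫ f := by rw [Category.assoc]
        _ = v ≫ snd ≫ g := by rw [h.w]
        _ = (v ≫ snd) ≫ g := by rw [Category.assoc]
    exact hg.right_cancellation _ _ heq
  exact h.hom_ext huv h2

/-- Identity-shaped pullback square along a mono. -/
theorem SqPO.idPullbackOfMono {Q N X : 𝒞} (n : N ⟶ X) (hn : Mono n) (z : Q ⟶ N) :
    IsPullback z (𝟙 Q) n (z ≫ n) :=
  SqPO.mkIsPullback (Category.id_comp (z ≫ n)).symm
    (fun _ q _ => q)
    (fun p q h => hn.right_cancellation _ _ (by simpa using h.symm))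
    (fun _ _ _ => by simp)
    (fun α β _ h2 => by simpa using h2)

/-- The complement leg of a final pullback complement of a mono is a mono. -/
theorem SqPO.fpcMono [Adhesive 𝒞] {A B C D : 𝒞} {a : A ⟶ B} {c : B ⟶ C} {b : A ⟶ D} {d : D ⟶ C}
    (h : IsFinalPullbackComplement a c b d) (ha : Mono a) (hc : Mono c) : Mono d := by
  constructor
  intro T u v huv
  haveI := hc
  have hpb : IsPullback (pullback.fst c (u ≫ d)) (pullback.snd c (u ≫ d)) c (u ≫ d) :=
    IsPullback.of_hasPullback c (u ≫ d)
  set x := pullback.fst c (u ≫ d)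
  set y := pullback.snd c (u ≫ d)
  have hwu : x ≫ c = (y ≫ u) ≫ d := by simpa using hpb.w
  have hwv : x ≫ c = (y ≫ v) ≫ d := by rw [hwu]; simp [huv]
  have wu := h.isPullback.lift x (y ≫ u) hwu
  have wv := h.isPullback.lift x (y ≫ v) hwv
  have hwuv : h.isPullback.lift x (y ≫ u) hwu = h.isPullback.lift x (y ≫ v) hwv :=
    ha.right_cancellation _ _ (by simp)
  obtain ⟨wS, _, huniq⟩ := h.universal x y (u ≫ d) hpb (h.isPullback.lift x (y ≫ u) hwu)
    (by simp)
  have h1 : u = wS := huniq u ⟨rfl, by simp⟩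
  have h2 : v = wS := huniq v ⟨huv.symm, by rw [hwuv]; simp⟩
  rw [h1, h2]

/-- Composition (pasting) of final pullback complements. -/
theorem SqPO.fpcComp {A' A B C D D' : 𝒞} {a' : A' ⟶ A} {a : A ⟶ B} {c : B ⟶ C}
    {b : A ⟶ D} {d : D ⟶ C} {b' : A' ⟶ D'} {d' : D' ⟶ D}
    (h₁ : IsFinalPullbackComplement a c b d)
    (h₂ : IsFinalPullbackComplement a' b b' d') :
    IsFinalPullbackComplement (a' ≫ a) c b' (d' ≫ d) := by
  constructor
  · exact h₂.isPullback.paste_horiz h₁.isPullback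
  · intro P Q x y z hsq w hw
    obtain ⟨ws, ⟨hws1, hws2⟩, hwsu⟩ := h₁.universal x y z hsq (w ≫ a')
      (by rw [Category.assoc, hw])
    have hx : (w ≫ a') ≫ a = x := by rw [Category.assoc]; exact hw
    have hmid : IsPullback (w ≫ a') y b ws := by
      have hlp : ∀ {T : 𝒞} (p : T ⟶ A) (q : T ⟶ Q), p ≫ b = q ≫ ws → (p ≫ a) ≫ c = q ≫ z := by
        intro T p q hpq
        rw [Category.assoc, h₁.isPullback.w, ← Category.assoc, hpq, Category.assoc, hws1]
      refine SqPO.mkIsPullback hws2.symm ?_ ?_ ?_ ?_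
      · intro T p q hpq
        exact hsq.lift (p ≫ a) q (hlp p q hpq)
      · intro T p q hpq
        refine h₁.isPullback.hom_ext ?_ ?_
        · calc (hsq.lift (p ≫ a) q (hlp p q hpq) ≫ w ≫ a') ≫ a
              = hsq.lift (p ≫ a) q (hlp p q hpq) ≫ (w ≫ a') ≫ a := by
                simp only [Category.assoc]
            _ = hsq.lift (p ≫ a) q (hlp p q hpq) ≫ x := by rw [hx]
            _ = p ≫ a := hsq.lift_fst _ _ _
        · calc (hsq.lift (p ≫ a) q (hlp p q hpq) ≫ w ≫ a') ≫ b
              = hsq.lift (p ≫ a) q (hlp p q hpq) ≫ (w ≫ a') ≫ b := by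
                simp only [Category.assoc]
            _ = hsq.lift (p ≫ a) q (hlp p q hpq) ≫ y ≫ ws := by rw [← hws2]
            _ = (hsq.lift (p ≫ a) q (hlp p q hpq) ≫ y) ≫ ws := by rw [Category.assoc]
            _ = q ≫ ws := by rw [hsq.lift_snd]
            _ = p ≫ b := hpq.symm
      · intro T p q hpq; simp
      · intro T α β h1 h2
        refine hsq.hom_ext ?_ h2
        calc α ≫ x = α ≫ (w ≫ a') ≫ a := by rw [hx]
          _ = (α ≫ w ≫ a') ≫ a := by simp only [Category.assoc]
          _ = (β ≫ w ≫ a') ≫ a := by rw [h1]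
          _ = β ≫ (w ≫ a') ≫ a := by simp only [Category.assoc]
          _ = β ≫ x := by rw [hx]
    obtain ⟨wS, ⟨h1, h2⟩, hu⟩ := h₂.universal (w ≫ a') y ws hmid w rfl
    refine ⟨wS, ⟨by rw [← Category.assoc, h1, hws1], h2⟩, ?_⟩
    intro v ⟨hv1, hv2⟩
    have hvd : v ≫ d' = ws := by
      refine hwsu (v ≫ d') ⟨by rw [Category.assoc]; exact hv1, ?_⟩
      calc y ≫ v ≫ d' = (y ≫ v) ≫ d' := by rw [Category.assoc]
        _ = (w ≫ b') ≫ d' := by rw [hv2]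
        _ = w ≫ b' ≫ d' := by rw [Category.assoc]
        _ = w ≫ a' ≫ b := by rw [← h₂.isPullback.w]
        _ = (w ≫ a') ≫ b := by rw [Category.assoc]
    exact hu v ⟨hvd, hv2⟩

/-- Restriction of a final pullback complement along a mono through which the base factors. -/
theorem SqPO.fpcRestrict {K I X Kb N Kc : 𝒞}
    {i : K ⟶ I} {m : I ⟶ X} {k : K ⟶ Kb} {i' : Kb ⟶ X}
    (h : IsFinalPullbackComplement i m k i')
    {n : N ⟶ X} (hn : Mono n) {t : Kc ⟶ Kb} {ν : Kc ⟶ N}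
    (hpb : IsPullback t ν i' n)
    {m' : I ⟶ N} (hm : m' ≫ n = m)
    {κ : K ⟶ Kc} (hκt : κ ≫ t = k) (hκν : κ ≫ ν = i ≫ m') :
    IsFinalPullbackComplement i m' κ ν := by
  have big : IsPullback i (κ ≫ t) (m' ≫ n) i' := by rw [hκt, hm]; exact h.isPullback
  constructor
  · exact IsPullback.of_bot big hκν.symm hpb.flip
  · intro P Q x y z hsq w hw
    have hz : IsPullback x y m (z ≫ n) := by
      have := hsq.paste_vert (SqPO.idPullbackOfMono n hn z)
      rw [Category.comp_id, hm] at this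
      exact this
    obtain ⟨ws, ⟨hws1, hws2⟩, hwsu⟩ := h.universal x y (z ≫ n) hz w hw
    have hlift : ws ≫ i' = z ≫ n := hws1
    refine ⟨hpb.lift ws z hlift, ⟨by simp, ?_⟩, ?_⟩
    · refine hpb.hom_ext ?_ ?_
      · calc (y ≫ hpb.lift ws z hlift) ≫ t = y ≫ ws := by rw [Category.assoc, hpb.lift_fst]
          _ = (w ≫ κ) ≫ t := by rw [hws2, ← hκt, Category.assoc]
      · calc (y ≫ hpb.lift ws z hlift) ≫ ν = y ≫ z := by rw [Category.assoc, hpb.lift_snd]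
          _ = x ≫ m' := hsq.w.symm
          _ = (w ≫ i) ≫ m' := by rw [hw]
          _ = (w ≫ κ) ≫ ν := by rw [Category.assoc, Category.assoc, hκν]
    · intro v ⟨hv1, hv2⟩
      have hvt : v ≫ t = ws := by
        refine hwsu (v ≫ t) ⟨?_, ?_⟩
        · rw [Category.assoc, hpb.w, ← Category.assoc, hv1]
        · rw [← Category.assoc, hv2, Category.assoc, hκt]
      refine hpb.hom_ext ?_ ?_
      · rw [hvt, hpb.lift_fst]
      · rw [hv1, hpb.lift_snd]

/-- Pullback-stability of pushouts along monomorphisms in an adhesive category. -/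
theorem SqPO.vkStability [Adhesive 𝒞]
    {W X Y Z W' X' Y' Z' : 𝒞} {f : W ⟶ X} {g : W ⟶ Y} {h : X ⟶ Z} {i : Y ⟶ Z} [Mono f]
    (H : IsPushout f g h i)
    (f' : W' ⟶ X') (g' : W' ⟶ Y') (h' : X' ⟶ Z') (i' : Y' ⟶ Z')
    (αW : W' ⟶ W) (αX : X' ⟶ X) (αY : Y' ⟶ Y) (αZ : Z' ⟶ Z)
    (hf : IsPullback f' αW αX f) (hg : IsPullback g' αW αY g)
    (hh : IsPullback h' αX αZ h) (hi : IsPullback i' αY αZ i)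
    (wsq : CommSq f' g' h' i') : IsPushout f' g' h' i' :=
  ((Adhesive.van_kampen H) f' g' h' i' αW αX αY αZ hf hg hh.toCommSq hi.toCommSq wsq).2 ⟨hh, hi⟩

theorem SqPO.mkIsPullback' {P X Y Z : 𝒞} {fst : P ⟶ X} {snd : P ⟶ Y} {f : X ⟶ Z} {g : Y ⟶ Z}
    (w : fst ≫ f = snd ≫ g)
    (h : ∀ {T : 𝒞} (p : T ⟶ X) (q : T ⟶ Y), p ≫ f = q ≫ g →
        ∃! l : T ⟶ P, l ≫ fst = p ∧ l ≫ snd = q) :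
    IsPullback fst snd f g := by
  refine SqPO.mkIsPullback w (fun p q hpq => (h p q hpq).choose) ?_ ?_ ?_
  · intro T p q hpq; exact (h p q hpq).choose_spec.1.1
  · intro T p q hpq; exact (h p q hpq).choose_spec.1.2
  · intro T α β h1 h2
    have hc : (α ≫ fst) ≫ f = (α ≫ snd) ≫ g := by
      rw [Category.assoc, w, ← Category.assoc]
    obtain ⟨l, _, hu⟩ := h (α ≫ fst) (α ≫ snd) hc
    rw [hu α ⟨rfl, rfl⟩, hu β ⟨h1.symm, h2.symm⟩]

end Helpers

/-- **SqPO concurrency theorem, synthesis direction (rules without conditions).**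
In an adhesive, balanced category with epi–mono factorizations, effective unions, a
strict initial object whose outgoing morphisms are monomorphisms, and in which every
composable pair of monomorphisms admits a final pullback complement: given two linear
rules `r₁ = (O₁ ⟵o₁ K₁ ⟶i₁ I₁)`, `r₂ = (O₂ ⟵o₂ K₂ ⟶i₂ I₂)`, a two-step sequence of
SqPO derivations `X₀ ⟹[r₁,m₁] X₁ ⟹[r₂,m₂] X₂`, and `M₂₁` a pullback of the cospan
`(m₂, m₁*)`, the SqPO-composite rule `r₂₁ = r₂ ▷μ₂₁◁ r₁` exists (in particular the
required pushout complement exists) and there is a monomorphism `m₂₁ : I₂₁ ⟶ X₀` such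
that the SqPO derivation of `X₀` along `r₂₁` at `m₂₁` produces an object isomorphic
to `X₂`. -/
theorem sqpo_concurrency_synthesis {𝒞 : Type u} [Category.{v} 𝒞]
    [Adhesive 𝒞] [Balanced 𝒞] [HasInitial 𝒞] [HasStrictInitialObjects 𝒞]
    [InitialMonoClass 𝒞]
    (hfact : HasEpiMonoFactorizations 𝒞) (heu : HasEffectiveUnions 𝒞)
    (hFPC : ∀ {A B C : 𝒞} (a : A ⟶ B) (c : B ⟶ C), Mono a → Mono c →
      ∃ (D : 𝒞) (b : A ⟶ D) (d : D ⟶ C), IsFinalPullbackComplement a c b d)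
    -- the two linear rules
    {O₁ K₁ I₁ O₂ K₂ I₂ : 𝒞}
    (o₁ : K₁ ⟶ O₁) (i₁ : K₁ ⟶ I₁) [Mono o₁] [Mono i₁]
    (o₂ : K₂ ⟶ O₂) (i₂ : K₂ ⟶ I₂) [Mono o₂] [Mono i₂]
    -- first SqPO derivation: X₀ ⟹[r₁, m₁] X₁, with comatch m₁*
    {X₀ X₁ Kbar₁ : 𝒞}
    (m₁ : I₁ ⟶ X₀) [Mono m₁]
    (k₁ : K₁ ⟶ Kbar₁) (i₁' : Kbar₁ ⟶ X₀)
    (hfpc₁ : IsFinalPullbackComplement i₁ m₁ k₁ i₁')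
    (m₁star : O₁ ⟶ X₁) (o₁' : Kbar₁ ⟶ X₁)
    (hpo₁ : IsPushout o₁ k₁ m₁star o₁')
    -- second SqPO derivation: X₁ ⟹[r₂, m₂] X₂
    {X₂ Kbar₂ : 𝒞}
    (m₂ : I₂ ⟶ X₁) [Mono m₂]
    (k₂ : K₂ ⟶ Kbar₂) (i₂' : Kbar₂ ⟶ X₁)
    (hfpc₂ : IsFinalPullbackComplement i₂ m₂ k₂ i₂')
    (m₂star : O₂ ⟶ X₂) (o₂' : Kbar₂ ⟶ X₂)
    (hpo₂ : IsPushout o₂ k₂ m₂star o₂')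
    -- the span μ₂₁ = (I₂ ⟵s₂ M₂₁ ⟶s₁ O₁), a pullback of the cospan (m₂, m₁*)
    {M₂₁ : 𝒞} (s₂ : M₂₁ ⟶ I₂) (s₁ : M₂₁ ⟶ O₁)
    (hμ : IsPullback s₂ s₁ m₂ m₁star) :
    -- (i) the SqPO composite rule r₂₁ = r₂ ▷μ₂₁◁ r₁ exists ...
    ∃ (N₂₁ : 𝒞) (m₂' : I₂ ⟶ N₂₁) (m₁' : O₁ ⟶ N₂₁),
      IsPushout s₂ s₁ m₂' m₁' ∧
    ∃ (K₂c : 𝒞) (κ₂ : K₂ ⟶ K₂c) (ν₂ : K₂c ⟶ N₂₁),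
      IsFinalPullbackComplement i₂ m₂' κ₂ ν₂ ∧
    ∃ (O₂₁ : 𝒞) (oc : O₂ ⟶ O₂₁) (kc : K₂c ⟶ O₂₁),
      IsPushout o₂ κ₂ oc kc ∧
    -- ... in particular the pushout complement of (o₁, m₁') exists ...
    ∃ (K₁c : 𝒞) (κ₁ : K₁ ⟶ K₁c) (ν₁ : K₁c ⟶ N₂₁),
      IsPushout o₁ κ₁ m₁' ν₁ ∧
    ∃ (I₂₁ : 𝒞) (j₁ : K₁c ⟶ I₂₁) (p₁ : I₁ ⟶ I₂₁),
      IsPushout κ₁ i₁ j₁ p₁ ∧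
    ∃ (K₂₁ : 𝒞) (q₂ : K₂₁ ⟶ K₂c) (q₁ : K₂₁ ⟶ K₁c),
      IsPullback q₂ q₁ ν₂ ν₁ ∧
    -- (ii) ... and there is a monomorphism m₂₁ : I₂₁ ⟶ X₀ such that the SqPO
    -- derivation of X₀ along r₂₁ = (O₂₁ ⟵ q₂≫kc K₂₁ ⟶ q₁≫j₁ I₂₁) at m₂₁ produces an
    -- object isomorphic to X₂
    ∃ (m₂₁ : I₂₁ ⟶ X₀), Mono m₂₁ ∧
    ∃ (Kbar : 𝒞) (kk : K₂₁ ⟶ Kbar) (ii : Kbar ⟶ X₀),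
      IsFinalPullbackComplement (q₁ ≫ j₁) m₂₁ kk ii ∧
    ∃ (X₂' : 𝒞) (mm : O₂₁ ⟶ X₂') (oo : Kbar ⟶ X₂'),
      IsPushout (q₂ ≫ kc) kk mm oo ∧ Nonempty (X₂' ≅ X₂) := by
  classical
  -- basic monomorphisms
  haveI hk₁ : Mono k₁ := SqPO.monoFst hfpc₁.isPullback.flip inferInstance
  haveI hk₂ : Mono k₂ := SqPO.monoFst hfpc₂.isPullback.flip inferInstance
  haveI hm₁s : Mono m₁star := Adhesive.mono_of_isPushout_of_mono_right hpo₁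
  haveI ho₁' : Mono o₁' := Adhesive.mono_of_isPushout_of_mono_left hpo₁
  haveI ho₂' : Mono o₂' := Adhesive.mono_of_isPushout_of_mono_left hpo₂
  haveI hi₁' : Mono i₁' := SqPO.fpcMono hfpc₁ inferInstance inferInstance
  haveI hi₂' : Mono i₂' := SqPO.fpcMono hfpc₂ inferInstance inferInstance
  haveI hs₂ : Mono s₂ := SqPO.monoFst hμ hm₁s
  haveI hs₁ : Mono s₁ := SqPO.monoFst hμ.flip inferInstance
  -- Step (i): the pushout N₂₁ and the mono n into X₁
  let m₂' : I₂ ⟶ pushout s₂ s₁ := pushout.inl s₂ s₁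
  let m₁' : O₁ ⟶ pushout s₂ s₁ := pushout.inr s₂ s₁
  have hN : IsPushout s₂ s₁ m₂' m₁' := IsPushout.of_hasPushout s₂ s₁
  haveI hm₂'m : Mono m₂' := Adhesive.mono_of_isPushout_of_mono_right hN
  haveI hm₁'m : Mono m₁' := Adhesive.mono_of_isPushout_of_mono_left hN
  let n : pushout s₂ s₁ ⟶ X₁ := hN.desc m₂ m₁star hμ.w
  have hm₂n : m₂' ≫ n = m₂ := hN.inl_desc _ _ _
  have hm₁n : m₁' ≫ n = m₁star := hN.inr_desc _ _ _
  have hn : Mono n :=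
    heu s₂ s₁ m₂' m₁' m₂ m₁star n hs₂ hs₁ hm₂'m hm₁'m inferInstance hm₁s hN hμ hm₂n hm₁n
  -- Step (ii): K₂c and the restricted FPC
  let t₂ : pullback i₂' n ⟶ Kbar₂ := pullback.fst i₂' n
  let ν₂ : pullback i₂' n ⟶ pushout s₂ s₁ := pullback.snd i₂' n
  have hK₂c : IsPullback t₂ ν₂ i₂' n := IsPullback.of_hasPullback i₂' n
  have hkey₂ : k₂ ≫ i₂' = (i₂ ≫ m₂') ≫ n := by
    rw [Category.assoc, hm₂n, hfpc₂.isPullback.w]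
  let κ₂ : K₂ ⟶ pullback i₂' n := hK₂c.lift k₂ (i₂ ≫ m₂') hkey₂
  have hκt₂ : κ₂ ≫ t₂ = k₂ := hK₂c.lift_fst _ _ _
  have hκν₂ : κ₂ ≫ ν₂ = i₂ ≫ m₂' := hK₂c.lift_snd _ _ _
  have hfpc₂' : IsFinalPullbackComplement i₂ m₂' κ₂ ν₂ :=
    SqPO.fpcRestrict hfpc₂ hn hK₂c hm₂n hκt₂ hκν₂
  -- Step (iii): the pushout O₂₁
  let oc : O₂ ⟶ pushout o₂ κ₂ := pushout.inl o₂ κ₂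
  let kc : pullback i₂' n ⟶ pushout o₂ κ₂ := pushout.inr o₂ κ₂
  have hO : IsPushout o₂ κ₂ oc kc := IsPushout.of_hasPushout o₂ κ₂
  -- Step (iv): K₁c and the pushout complement
  let u₁ : pullback o₁' n ⟶ Kbar₁ := pullback.fst o₁' n
  let ν₁ : pullback o₁' n ⟶ pushout s₂ s₁ := pullback.snd o₁' n
  have hK₁c : IsPullback u₁ ν₁ o₁' n := IsPullback.of_hasPullback o₁' n
  have e1 : ν₁ ≫ n = u₁ ≫ o₁' := hK₁c.w.symm
  have hkey₁ : k₁ ≫ o₁' = (o₁ ≫ m₁') ≫ n := by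
    rw [Category.assoc, hm₁n, hpo₁.w]
  let κ₁ : K₁ ⟶ pullback o₁' n := hK₁c.lift k₁ (o₁ ≫ m₁') hkey₁
  have hκu₁ : κ₁ ≫ u₁ = k₁ := hK₁c.lift_fst _ _ _
  have hκν₁ : κ₁ ≫ ν₁ = o₁ ≫ m₁' := hK₁c.lift_snd _ _ _
  have hgface : IsPullback κ₁ (𝟙 K₁) u₁ k₁ := by
    refine SqPO.mkIsPullback' (by rw [Category.id_comp, hκu₁]) ?_
    intro T p q hpq
    have subu : (q ≫ κ₁) ≫ u₁ = p ≫ u₁ := by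
      rw [Category.assoc, hκu₁]; exact hpq.symm
    have subν : (q ≫ κ₁) ≫ ν₁ = p ≫ ν₁ := by
      apply hn.right_cancellation
      calc ((q ≫ κ₁) ≫ ν₁) ≫ n = (q ≫ κ₁) ≫ ν₁ ≫ n := by rw [Category.assoc]
        _ = (q ≫ κ₁) ≫ u₁ ≫ o₁' := by rw [e1]
        _ = ((q ≫ κ₁) ≫ u₁) ≫ o₁' := by rw [← Category.assoc]
        _ = (p ≫ u₁) ≫ o₁' := by rw [subu]
        _ = p ≫ u₁ ≫ o₁' := by rw [Category.assoc]
        _ = p ≫ ν₁ ≫ n := by rw [← e1]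
        _ = (p ≫ ν₁) ≫ n := by rw [← Category.assoc]
    refine ⟨q, ⟨hK₁c.hom_ext subu subν, Category.comp_id q⟩, ?_⟩
    intro v ⟨_, hv2⟩
    simpa using hv2
  have hhface : IsPullback m₁' (𝟙 O₁) n m₁star := by
    have h0 := SqPO.idPullbackOfMono n hn m₁'
    rwa [hm₁n] at h0
  have hK1po : IsPushout o₁ κ₁ m₁' ν₁ :=
    SqPO.vkStability hpo₁ o₁ κ₁ m₁' ν₁ (𝟙 K₁) (𝟙 O₁) u₁ n
      (IsPullback.id_vert o₁) hgface hhface hK₁c.flip ⟨hκν₁.symm⟩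
  -- Step (v): the pushout I₂₁
  haveI hκ₁m : Mono κ₁ := by
    haveI : Mono (κ₁ ≫ u₁) := by rw [hκu₁]; exact hk₁
    exact mono_of_mono κ₁ u₁
  let j₁ : pullback o₁' n ⟶ pushout κ₁ i₁ := pushout.inl κ₁ i₁
  let p₁ : I₁ ⟶ pushout κ₁ i₁ := pushout.inr κ₁ i₁
  have hI : IsPushout κ₁ i₁ j₁ p₁ := IsPushout.of_hasPushout κ₁ i₁
  haveI hj₁m : Mono j₁ := Adhesive.mono_of_isPushout_of_mono_right hI
  haveI hp₁m : Mono p₁ := Adhesive.mono_of_isPushout_of_mono_left hI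
  -- Step (vi): the pullback K₂₁
  haveI hν₂m : Mono ν₂ := SqPO.monoFst hK₂c.flip hi₂'
  haveI hν₁m : Mono ν₁ := SqPO.monoFst hK₁c.flip ho₁'
  haveI ht₂m : Mono t₂ := SqPO.monoFst hK₂c hn
  haveI hu₁m : Mono u₁ := SqPO.monoFst hK₁c hn
  let q₂ : pullback ν₂ ν₁ ⟶ pullback i₂' n := pullback.fst ν₂ ν₁
  let q₁ : pullback ν₂ ν₁ ⟶ pullback o₁' n := pullback.snd ν₂ ν₁
  have hK₂₁ : IsPullback q₂ q₁ ν₂ ν₁ := IsPullback.of_hasPullback ν₂ ν₁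
  haveI hq₂m : Mono q₂ := SqPO.monoFst hK₂₁ hν₁m
  haveI hq₁m : Mono q₁ := SqPO.monoFst hK₂₁.flip hν₂m
  -- the match m₂₁
  have hdesc : κ₁ ≫ u₁ ≫ i₁' = i₁ ≫ m₁ := by
    rw [← Category.assoc, hκu₁, ← hfpc₁.isPullback.w]
  let m₂₁ : pushout κ₁ i₁ ⟶ X₀ := hI.desc (u₁ ≫ i₁') m₁ hdesc
  have hj₁d : j₁ ≫ m₂₁ = u₁ ≫ i₁' := hI.inl_desc _ _ _
  have hp₁d : p₁ ≫ m₂₁ = m₁ := hI.inr_desc _ _ _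
  have hpbKI : IsPullback κ₁ i₁ (u₁ ≫ i₁') m₁ := by
    refine SqPO.mkIsPullback' hdesc ?_
    intro T p q hpq
    have hLw : q ≫ m₁ = (p ≫ u₁) ≫ i₁' := by
      rw [Category.assoc]; exact hpq.symm
    let L : T ⟶ K₁ := hfpc₁.isPullback.lift q (p ≫ u₁) hLw
    have hL1 : L ≫ i₁ = q := hfpc₁.isPullback.lift_fst _ _ _
    have hL2 : L ≫ k₁ = p ≫ u₁ := hfpc₁.isPullback.lift_snd _ _ _
    have subu : (L ≫ κ₁) ≫ u₁ = p ≫ u₁ := by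
      calc (L ≫ κ₁) ≫ u₁ = L ≫ κ₁ ≫ u₁ := by rw [Category.assoc]
        _ = L ≫ k₁ := by rw [hκu₁]
        _ = p ≫ u₁ := hL2
    have subν : (L ≫ κ₁) ≫ ν₁ = p ≫ ν₁ := by
      apply hn.right_cancellation
      calc ((L ≫ κ₁) ≫ ν₁) ≫ n = (L ≫ κ₁) ≫ ν₁ ≫ n := by rw [Category.assoc]
        _ = (L ≫ κ₁) ≫ u₁ ≫ o₁' := by rw [e1]
        _ = ((L ≫ κ₁) ≫ u₁) ≫ o₁' := by rw [← Category.assoc]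
        _ = (p ≫ u₁) ≫ o₁' := by rw [subu]
        _ = p ≫ u₁ ≫ o₁' := by rw [Category.assoc]
        _ = p ≫ ν₁ ≫ n := by rw [← e1]
        _ = (p ≫ ν₁) ≫ n := by rw [← Category.assoc]
    refine ⟨L, ⟨hK₁c.hom_ext subu subν, hL1⟩, ?_⟩
    intro v ⟨hv1, hv2⟩
    refine hfpc₁.isPullback.hom_ext (by rw [hv2, hL1]) ?_
    calc v ≫ k₁ = v ≫ κ₁ ≫ u₁ := by rw [hκu₁]
      _ = (v ≫ κ₁) ≫ u₁ := by rw [← Category.assoc]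
      _ = p ≫ u₁ := by rw [hv1]
      _ = L ≫ k₁ := hL2.symm
  have hm₂₁mono : Mono m₂₁ :=
    heu κ₁ i₁ j₁ p₁ (u₁ ≫ i₁') m₁ m₂₁ hκ₁m inferInstance hj₁m hp₁m inferInstance inferInstance
      hI hpbKI hj₁d hp₁d
  -- the interface Kbar
  let a : pullback o₁' i₂' ⟶ Kbar₁ := pullback.fst o₁' i₂'
  let b : pullback o₁' i₂' ⟶ Kbar₂ := pullback.snd o₁' i₂'
  have hKb : IsPullback a b o₁' i₂' := IsPullback.of_hasPullback o₁' i₂'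
  haveI ham : Mono a := SqPO.monoFst hKb hi₂'
  haveI hbm : Mono b := SqPO.monoFst hKb.flip ho₁'
  have hkkw : (q₁ ≫ u₁) ≫ o₁' = (q₂ ≫ t₂) ≫ i₂' := by
    calc (q₁ ≫ u₁) ≫ o₁' = q₁ ≫ u₁ ≫ o₁' := by rw [Category.assoc]
      _ = q₁ ≫ ν₁ ≫ n := by rw [← e1]
      _ = (q₁ ≫ ν₁) ≫ n := by rw [← Category.assoc]
      _ = (q₂ ≫ ν₂) ≫ n := by rw [← hK₂₁.w]
      _ = q₂ ≫ ν₂ ≫ n := by rw [Category.assoc]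
      _ = q₂ ≫ t₂ ≫ i₂' := by rw [← hK₂c.w]
      _ = (q₂ ≫ t₂) ≫ i₂' := by rw [← Category.assoc]
  let kk : pullback ν₂ ν₁ ⟶ pullback o₁' i₂' := hKb.lift (q₁ ≫ u₁) (q₂ ≫ t₂) hkkw
  have hkka : kk ≫ a = q₁ ≫ u₁ := hKb.lift_fst _ _ _
  have hkkb : kk ≫ b = q₂ ≫ t₂ := hKb.lift_snd _ _ _
  haveI hkkm : Mono kk := by
    haveI : Mono (kk ≫ b) := by rw [hkkb]; infer_instance
    exact mono_of_mono kk b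
  -- the square S1
  have hS1 : IsPullback q₁ kk u₁ a := by
    refine SqPO.mkIsPullback' hkka.symm ?_
    intro T pT qT h
    have hc₂w : (qT ≫ b) ≫ i₂' = (pT ≫ ν₁) ≫ n := by
      calc (qT ≫ b) ≫ i₂' = qT ≫ b ≫ i₂' := by rw [Category.assoc]
        _ = qT ≫ a ≫ o₁' := by rw [← hKb.w]
        _ = (qT ≫ a) ≫ o₁' := by rw [← Category.assoc]
        _ = (pT ≫ u₁) ≫ o₁' := by rw [← h]
        _ = pT ≫ u₁ ≫ o₁' := by rw [Category.assoc]
        _ = pT ≫ ν₁ ≫ n := by rw [← e1]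
        _ = (pT ≫ ν₁) ≫ n := by rw [← Category.assoc]
    let c₂ : T ⟶ pullback i₂' n := hK₂c.lift (qT ≫ b) (pT ≫ ν₁) hc₂w
    have hc₂1 : c₂ ≫ t₂ = qT ≫ b := hK₂c.lift_fst _ _ _
    have hc₂2 : c₂ ≫ ν₂ = pT ≫ ν₁ := hK₂c.lift_snd _ _ _
    let l : T ⟶ pullback ν₂ ν₁ := hK₂₁.lift c₂ pT (by rw [hc₂2])
    have hl1 : l ≫ q₂ = c₂ := hK₂₁.lift_fst _ _ _
    have hl2 : l ≫ q₁ = pT := hK₂₁.lift_snd _ _ _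
    refine ⟨l, ⟨hl2, ?_⟩, ?_⟩
    · refine hKb.hom_ext ?_ ?_
      · calc (l ≫ kk) ≫ a = l ≫ kk ≫ a := by rw [Category.assoc]
          _ = l ≫ q₁ ≫ u₁ := by rw [hkka]
          _ = (l ≫ q₁) ≫ u₁ := by rw [← Category.assoc]
          _ = pT ≫ u₁ := by rw [hl2]
          _ = qT ≫ a := h
      · calc (l ≫ kk) ≫ b = l ≫ kk ≫ b := by rw [Category.assoc]
          _ = l ≫ q₂ ≫ t₂ := by rw [hkkb]
          _ = (l ≫ q₂) ≫ t₂ := by rw [← Category.assoc]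
          _ = c₂ ≫ t₂ := by rw [hl1]
          _ = qT ≫ b := hc₂1
    · intro v ⟨hv1, hv2⟩
      refine hK₂₁.hom_ext ?_ (by rw [hv1, hl2])
      refine hK₂c.hom_ext ?_ ?_
      · calc (v ≫ q₂) ≫ t₂ = v ≫ q₂ ≫ t₂ := by rw [Category.assoc]
          _ = v ≫ kk ≫ b := by rw [← hkkb]
          _ = (v ≫ kk) ≫ b := by rw [← Category.assoc]
          _ = qT ≫ b := by rw [hv2]
          _ = c₂ ≫ t₂ := hc₂1.symm
          _ = (l ≫ q₂) ≫ t₂ := by rw [hl1]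
      · calc (v ≫ q₂) ≫ ν₂ = v ≫ q₂ ≫ ν₂ := by rw [Category.assoc]
          _ = v ≫ q₁ ≫ ν₁ := by rw [hK₂₁.w]
          _ = (v ≫ q₁) ≫ ν₁ := by rw [← Category.assoc]
          _ = pT ≫ ν₁ := by rw [hv1]
          _ = c₂ ≫ ν₂ := hc₂2.symm
          _ = (l ≫ q₂) ≫ ν₂ := by rw [hl1]
  -- the square S2 : K₁c is the pullback of I₂₁ and Kbar₁ over X₀
  have hS2 : IsPullback j₁ u₁ m₂₁ i₁' := by
    refine SqPO.mkIsPullback' hj₁d ?_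
    intro T pT qT h
    -- pull the pushout hI back along pT
    let αX : pullback j₁ pT ⟶ pullback o₁' n := pullback.fst j₁ pT
    let h' : pullback j₁ pT ⟶ T := pullback.snd j₁ pT
    have dX : IsPullback αX h' j₁ pT := IsPullback.of_hasPullback j₁ pT
    let αY : pullback p₁ pT ⟶ I₁ := pullback.fst p₁ pT
    let i' : pullback p₁ pT ⟶ T := pullback.snd p₁ pT
    have dY : IsPullback αY i' p₁ pT := IsPullback.of_hasPullback p₁ pT
    let αW : pullback κ₁ αX ⟶ K₁ := pullback.fst κ₁ αX
    let f' : pullback κ₁ αX ⟶ pullback j₁ pT := pullback.snd κ₁ αX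
    have dW : IsPullback αW f' κ₁ αX := IsPullback.of_hasPullback κ₁ αX
    have hg'w : (αW ≫ i₁) ≫ p₁ = (f' ≫ h') ≫ pT := by
      calc (αW ≫ i₁) ≫ p₁ = αW ≫ i₁ ≫ p₁ := by rw [Category.assoc]
        _ = αW ≫ κ₁ ≫ j₁ := by rw [← hI.w]
        _ = (αW ≫ κ₁) ≫ j₁ := by rw [← Category.assoc]
        _ = (f' ≫ αX) ≫ j₁ := by rw [dW.w]
        _ = f' ≫ αX ≫ j₁ := by rw [Category.assoc]
        _ = f' ≫ h' ≫ pT := by rw [dX.w]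
        _ = (f' ≫ h') ≫ pT := by rw [← Category.assoc]
    let g' : pullback κ₁ αX ⟶ pullback p₁ pT := dY.lift (αW ≫ i₁) (f' ≫ h') hg'w
    have hg'1 : g' ≫ αY = αW ≫ i₁ := dY.lift_fst _ _ _
    have hg'2 : g' ≫ i' = f' ≫ h' := dY.lift_snd _ _ _
    have hbigpb : IsPullback (g' ≫ i') αW pT (i₁ ≫ p₁) := by
      have h0 := (dW.flip).paste_horiz dX.flip
      rw [hI.w, ← hg'2] at h0
      exact h0
    have hgface2 : IsPullback g' αW αY i₁ := IsPullback.of_right hbigpb hg'1 dY.flip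
    have hTpo : IsPushout f' g' h' i' :=
      SqPO.vkStability hI f' g' h' i' αW αX αY pT dW.flip hgface2 dX.flip dY.flip ⟨hg'2.symm⟩
    -- the comparison map τ into K₁
    have hτw : αY ≫ m₁ = (i' ≫ qT) ≫ i₁' := by
      calc αY ≫ m₁ = αY ≫ p₁ ≫ m₂₁ := by rw [hp₁d]
        _ = (αY ≫ p₁) ≫ m₂₁ := by rw [← Category.assoc]
        _ = (i' ≫ pT) ≫ m₂₁ := by rw [dY.w]
        _ = i' ≫ pT ≫ m₂₁ := by rw [Category.assoc]
        _ = i' ≫ qT ≫ i₁' := by rw [h]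
        _ = (i' ≫ qT) ≫ i₁' := by rw [← Category.assoc]
    let τ : pullback p₁ pT ⟶ K₁ := hfpc₁.isPullback.lift αY (i' ≫ qT) hτw
    have hτ1 : τ ≫ i₁ = αY := hfpc₁.isPullback.lift_fst _ _ _
    have hτ2 : τ ≫ k₁ = i' ≫ qT := hfpc₁.isPullback.lift_snd _ _ _
    have hkey : αX ≫ u₁ = h' ≫ qT := by
      apply hi₁'.right_cancellation
      calc (αX ≫ u₁) ≫ i₁' = αX ≫ u₁ ≫ i₁' := by rw [Category.assoc]
        _ = αX ≫ j₁ ≫ m₂₁ := by rw [hj₁d]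
        _ = (αX ≫ j₁) ≫ m₂₁ := by rw [← Category.assoc]
        _ = (h' ≫ pT) ≫ m₂₁ := by rw [dX.w]
        _ = h' ≫ pT ≫ m₂₁ := by rw [Category.assoc]
        _ = h' ≫ qT ≫ i₁' := by rw [h]
        _ = (h' ≫ qT) ≫ i₁' := by rw [← Category.assoc]
    have comp_u : (f' ≫ αX) ≫ u₁ = (g' ≫ τ ≫ κ₁) ≫ u₁ := by
      calc (f' ≫ αX) ≫ u₁ = f' ≫ αX ≫ u₁ := by rw [Category.assoc]
        _ = f' ≫ h' ≫ qT := by rw [hkey]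
        _ = (f' ≫ h') ≫ qT := by rw [← Category.assoc]
        _ = (g' ≫ i') ≫ qT := by rw [hg'2]
        _ = g' ≫ i' ≫ qT := by rw [Category.assoc]
        _ = g' ≫ τ ≫ k₁ := by rw [← hτ2]
        _ = g' ≫ τ ≫ κ₁ ≫ u₁ := by rw [hκu₁]
        _ = g' ≫ (τ ≫ κ₁) ≫ u₁ := by rw [← Category.assoc τ κ₁ u₁]
        _ = (g' ≫ τ ≫ κ₁) ≫ u₁ := by rw [← Category.assoc]
    have hagree : f' ≫ αX = g' ≫ τ ≫ κ₁ := by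
      refine hK₁c.hom_ext comp_u ?_
      apply hn.right_cancellation
      calc ((f' ≫ αX) ≫ ν₁) ≫ n = (f' ≫ αX) ≫ ν₁ ≫ n := by rw [Category.assoc]
        _ = (f' ≫ αX) ≫ u₁ ≫ o₁' := by rw [e1]
        _ = ((f' ≫ αX) ≫ u₁) ≫ o₁' := by rw [← Category.assoc]
        _ = ((g' ≫ τ ≫ κ₁) ≫ u₁) ≫ o₁' := by rw [comp_u]
        _ = (g' ≫ τ ≫ κ₁) ≫ u₁ ≫ o₁' := by rw [Category.assoc]
        _ = (g' ≫ τ ≫ κ₁) ≫ ν₁ ≫ n := by rw [← e1]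
        _ = ((g' ≫ τ ≫ κ₁) ≫ ν₁) ≫ n := by rw [← Category.assoc]
    let l : T ⟶ pullback o₁' n := hTpo.desc αX (τ ≫ κ₁) hagree
    have hl1 : h' ≫ l = αX := hTpo.inl_desc _ _ _
    have hl2 : i' ≫ l = τ ≫ κ₁ := hTpo.inr_desc _ _ _
    have hlj : l ≫ j₁ = pT := by
      refine hTpo.hom_ext ?_ ?_
      · calc h' ≫ l ≫ j₁ = (h' ≫ l) ≫ j₁ := by rw [← Category.assoc]
          _ = αX ≫ j₁ := by rw [hl1]
          _ = h' ≫ pT := dX.w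
      · calc i' ≫ l ≫ j₁ = (i' ≫ l) ≫ j₁ := by rw [← Category.assoc]
          _ = (τ ≫ κ₁) ≫ j₁ := by rw [hl2]
          _ = τ ≫ κ₁ ≫ j₁ := by rw [Category.assoc]
          _ = τ ≫ i₁ ≫ p₁ := by rw [hI.w]
          _ = (τ ≫ i₁) ≫ p₁ := by rw [← Category.assoc]
          _ = αY ≫ p₁ := by rw [hτ1]
          _ = i' ≫ pT := dY.w
    have hlu : l ≫ u₁ = qT := by
      apply hi₁'.right_cancellation
      calc (l ≫ u₁) ≫ i₁' = l ≫ u₁ ≫ i₁' := by rw [Category.assoc]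
        _ = l ≫ j₁ ≫ m₂₁ := by rw [hj₁d]
        _ = (l ≫ j₁) ≫ m₂₁ := by rw [← Category.assoc]
        _ = pT ≫ m₂₁ := by rw [hlj]
        _ = qT ≫ i₁' := h
    exact ⟨l, ⟨hlj, hlu⟩, fun v hv => hj₁m.right_cancellation v l (by rw [hv.1, hlj])⟩
  -- base pullback square of the composite FPC
  have hBase : IsPullback (q₁ ≫ j₁) kk m₂₁ (a ≫ i₁') := hS1.paste_horiz hS2
  have hIpb : IsPullback κ₁ i₁ j₁ p₁ := Adhesive.isPullback_of_isPushout_of_mono_left hI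
  -- universal property of the composite FPC
  have hUniv : ∀ {P Q : 𝒞} (x : P ⟶ pushout κ₁ i₁) (y : P ⟶ Q) (z : Q ⟶ X₀),
      IsPullback x y m₂₁ z → ∀ (w : P ⟶ pullback ν₂ ν₁), w ≫ (q₁ ≫ j₁) = x →
        ∃! wStar : Q ⟶ pullback o₁' i₂', wStar ≫ (a ≫ i₁') = z ∧ y ≫ wStar = w ≫ kk := by
    intro P Q x y z hsq w hw
    -- Step 1: the component into Kbar₁ via the first FPC
    let f₁ : pullback p₁ x ⟶ I₁ := pullback.fst p₁ x
    let e₁ : pullback p₁ x ⟶ P := pullback.snd p₁ x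
    have dP₁ : IsPullback f₁ e₁ p₁ x := IsPullback.of_hasPullback p₁ x
    have hsq' : IsPullback f₁ (e₁ ≫ y) m₁ z := by
      have h0 := dP₁.paste_vert hsq
      rwa [hp₁d] at h0
    have hw' : (e₁ ≫ w ≫ q₁) ≫ j₁ = f₁ ≫ p₁ := by
      calc (e₁ ≫ w ≫ q₁) ≫ j₁ = e₁ ≫ w ≫ q₁ ≫ j₁ := by simp only [Category.assoc]
        _ = e₁ ≫ x := by rw [hw]
        _ = f₁ ≫ p₁ := dP₁.w.symm
    let w' : pullback p₁ x ⟶ K₁ := hIpb.lift (e₁ ≫ w ≫ q₁) f₁ hw'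
    have hw'1 : w' ≫ κ₁ = e₁ ≫ w ≫ q₁ := hIpb.lift_fst _ _ _
    have hw'2 : w' ≫ i₁ = f₁ := hIpb.lift_snd _ _ _
    obtain ⟨ω₁, ⟨hω₁1, hω₁2⟩, hω₁u⟩ := hfpc₁.universal f₁ (e₁ ≫ y) z hsq' w' hw'2
    have fact1 : y ≫ ω₁ = w ≫ q₁ ≫ u₁ := by
      apply hi₁'.right_cancellation
      calc (y ≫ ω₁) ≫ i₁' = y ≫ ω₁ ≫ i₁' := by rw [Category.assoc]
        _ = y ≫ z := by rw [hω₁1]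
        _ = x ≫ m₂₁ := hsq.w.symm
        _ = (w ≫ q₁ ≫ j₁) ≫ m₂₁ := by rw [hw]
        _ = w ≫ q₁ ≫ j₁ ≫ m₂₁ := by simp only [Category.assoc]
        _ = w ≫ q₁ ≫ u₁ ≫ i₁' := by rw [hj₁d]
        _ = (w ≫ q₁ ≫ u₁) ≫ i₁' := by simp only [Category.assoc]
    -- Step 2: the component into Kbar₂ via the second FPC
    let x₂ : pullback m₂ (ω₁ ≫ o₁') ⟶ I₂ := pullback.fst m₂ (ω₁ ≫ o₁')
    let y₂ : pullback m₂ (ω₁ ≫ o₁') ⟶ Q := pullback.snd m₂ (ω₁ ≫ o₁')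
    have dP₂ : IsPullback x₂ y₂ m₂ (ω₁ ≫ o₁') := IsPullback.of_hasPullback m₂ (ω₁ ≫ o₁')
    have hζw : (y₂ ≫ ω₁) ≫ o₁' = (x₂ ≫ m₂') ≫ n := by
      calc (y₂ ≫ ω₁) ≫ o₁' = y₂ ≫ ω₁ ≫ o₁' := by rw [Category.assoc]
        _ = x₂ ≫ m₂ := dP₂.w.symm
        _ = x₂ ≫ m₂' ≫ n := by rw [hm₂n]
        _ = (x₂ ≫ m₂') ≫ n := by rw [← Category.assoc]
    let ζ : pullback m₂ (ω₁ ≫ o₁') ⟶ pullback o₁' n := hK₁c.lift (y₂ ≫ ω₁) (x₂ ≫ m₂') hζw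
    have hζ1 : ζ ≫ u₁ = y₂ ≫ ω₁ := hK₁c.lift_fst _ _ _
    have hζ2 : ζ ≫ ν₁ = x₂ ≫ m₂' := hK₁c.lift_snd _ _ _
    have hℓw : (ζ ≫ j₁) ≫ m₂₁ = y₂ ≫ z := by
      calc (ζ ≫ j₁) ≫ m₂₁ = ζ ≫ j₁ ≫ m₂₁ := by rw [Category.assoc]
        _ = ζ ≫ u₁ ≫ i₁' := by rw [hj₁d]
        _ = (ζ ≫ u₁) ≫ i₁' := by rw [← Category.assoc]
        _ = (y₂ ≫ ω₁) ≫ i₁' := by rw [hζ1]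
        _ = y₂ ≫ ω₁ ≫ i₁' := by rw [Category.assoc]
        _ = y₂ ≫ z := by rw [hω₁1]
    let ℓ : pullback m₂ (ω₁ ≫ o₁') ⟶ P := hsq.lift (ζ ≫ j₁) y₂ hℓw
    have hℓ1 : ℓ ≫ x = ζ ≫ j₁ := hsq.lift_fst _ _ _
    have hℓ2 : ℓ ≫ y = y₂ := hsq.lift_snd _ _ _
    have compu : (ℓ ≫ w ≫ q₁) ≫ u₁ = ζ ≫ u₁ := by
      calc (ℓ ≫ w ≫ q₁) ≫ u₁ = ℓ ≫ w ≫ q₁ ≫ u₁ := by simp only [Category.assoc]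
        _ = ℓ ≫ y ≫ ω₁ := by rw [← fact1]
        _ = (ℓ ≫ y) ≫ ω₁ := by rw [← Category.assoc]
        _ = y₂ ≫ ω₁ := by rw [hℓ2]
        _ = ζ ≫ u₁ := hζ1.symm
    have fact2 : ℓ ≫ w ≫ q₁ = ζ := by
      refine hK₁c.hom_ext compu ?_
      apply hn.right_cancellation
      calc ((ℓ ≫ w ≫ q₁) ≫ ν₁) ≫ n = (ℓ ≫ w ≫ q₁) ≫ ν₁ ≫ n := by rw [Category.assoc]
        _ = (ℓ ≫ w ≫ q₁) ≫ u₁ ≫ o₁' := by rw [e1]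
        _ = ((ℓ ≫ w ≫ q₁) ≫ u₁) ≫ o₁' := by rw [← Category.assoc]
        _ = (ζ ≫ u₁) ≫ o₁' := by rw [compu]
        _ = ζ ≫ u₁ ≫ o₁' := by rw [Category.assoc]
        _ = ζ ≫ ν₁ ≫ n := by rw [← e1]
        _ = (ζ ≫ ν₁) ≫ n := by rw [← Category.assoc]
    have hηw : x₂ ≫ m₂' = (ℓ ≫ w ≫ q₂) ≫ ν₂ := by
      calc x₂ ≫ m₂' = ζ ≫ ν₁ := hζ2.symm
        _ = (ℓ ≫ w ≫ q₁) ≫ ν₁ := by rw [fact2]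
        _ = ℓ ≫ w ≫ q₁ ≫ ν₁ := by simp only [Category.assoc]
        _ = ℓ ≫ w ≫ q₂ ≫ ν₂ := by rw [← hK₂₁.w]
        _ = (ℓ ≫ w ≫ q₂) ≫ ν₂ := by simp only [Category.assoc]
    let w₂ : pullback m₂ (ω₁ ≫ o₁') ⟶ K₂ := hfpc₂'.isPullback.lift x₂ (ℓ ≫ w ≫ q₂) hηw
    have hw₂1 : w₂ ≫ i₂ = x₂ := hfpc₂'.isPullback.lift_fst _ _ _
    have hw₂2 : w₂ ≫ κ₂ = ℓ ≫ w ≫ q₂ := hfpc₂'.isPullback.lift_snd _ _ _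
    obtain ⟨ω₂, ⟨hω₂1, hω₂2⟩, hω₂u⟩ := hfpc₂.universal x₂ y₂ (ω₁ ≫ o₁') dP₂ w₂ hw₂1
    -- assemble w*
    refine ⟨hKb.lift ω₁ ω₂ hω₂1.symm, ⟨?_, ?_⟩, ?_⟩
    · rw [← Category.assoc, hKb.lift_fst, hω₁1]
    · refine hKb.hom_ext ?_ ?_
      · calc (y ≫ hKb.lift ω₁ ω₂ hω₂1.symm) ≫ a
            = y ≫ hKb.lift ω₁ ω₂ hω₂1.symm ≫ a := by rw [Category.assoc]
          _ = y ≫ ω₁ := by rw [hKb.lift_fst]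
          _ = w ≫ q₁ ≫ u₁ := fact1
          _ = w ≫ kk ≫ a := by rw [hkka]
          _ = (w ≫ kk) ≫ a := by rw [← Category.assoc]
      · apply hi₂'.right_cancellation
        calc ((y ≫ hKb.lift ω₁ ω₂ hω₂1.symm) ≫ b) ≫ i₂'
            = y ≫ (hKb.lift ω₁ ω₂ hω₂1.symm ≫ b) ≫ i₂' := by simp only [Category.assoc]
          _ = y ≫ ω₂ ≫ i₂' := by rw [hKb.lift_snd]
          _ = y ≫ ω₁ ≫ o₁' := by rw [hω₂1]
          _ = (y ≫ ω₁) ≫ o₁' := by rw [← Category.assoc]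
          _ = (w ≫ q₁ ≫ u₁) ≫ o₁' := by rw [fact1]
          _ = w ≫ q₁ ≫ u₁ ≫ o₁' := by simp only [Category.assoc]
          _ = w ≫ q₁ ≫ ν₁ ≫ n := by rw [← e1]
          _ = w ≫ (q₁ ≫ ν₁) ≫ n := by rw [← Category.assoc q₁ ν₁ n]
          _ = w ≫ (q₂ ≫ ν₂) ≫ n := by rw [← hK₂₁.w]
          _ = w ≫ q₂ ≫ ν₂ ≫ n := by rw [Category.assoc q₂ ν₂ n]
          _ = w ≫ q₂ ≫ t₂ ≫ i₂' := by rw [← hK₂c.w]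
          _ = w ≫ (q₂ ≫ t₂) ≫ i₂' := by rw [← Category.assoc q₂ t₂ i₂']
          _ = w ≫ (kk ≫ b) ≫ i₂' := by rw [← hkkb]
          _ = ((w ≫ kk) ≫ b) ≫ i₂' := by simp only [Category.assoc]
    · intro v ⟨hv1, hv2⟩
      have hva : v ≫ a = ω₁ := by
        refine hω₁u (v ≫ a) ⟨by rw [Category.assoc]; exact hv1, ?_⟩
        calc (e₁ ≫ y) ≫ v ≫ a = e₁ ≫ (y ≫ v) ≫ a := by simp only [Category.assoc]
          _ = e₁ ≫ (w ≫ kk) ≫ a := by rw [hv2]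
          _ = e₁ ≫ w ≫ kk ≫ a := by simp only [Category.assoc]
          _ = e₁ ≫ w ≫ q₁ ≫ u₁ := by rw [hkka]
          _ = (e₁ ≫ w ≫ q₁) ≫ u₁ := by simp only [Category.assoc]
          _ = (w' ≫ κ₁) ≫ u₁ := by rw [hw'1]
          _ = w' ≫ κ₁ ≫ u₁ := by rw [Category.assoc]
          _ = w' ≫ k₁ := by rw [hκu₁]
      have hvb : v ≫ b = ω₂ := by
        refine hω₂u (v ≫ b) ⟨?_, ?_⟩
        · calc (v ≫ b) ≫ i₂' = v ≫ b ≫ i₂' := by rw [Category.assoc]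
            _ = v ≫ a ≫ o₁' := by rw [← hKb.w]
            _ = (v ≫ a) ≫ o₁' := by rw [← Category.assoc]
            _ = ω₁ ≫ o₁' := by rw [hva]
        · calc y₂ ≫ v ≫ b = (ℓ ≫ y) ≫ v ≫ b := by rw [hℓ2]
            _ = ℓ ≫ (y ≫ v) ≫ b := by simp only [Category.assoc]
            _ = ℓ ≫ (w ≫ kk) ≫ b := by rw [hv2]
            _ = ℓ ≫ w ≫ kk ≫ b := by simp only [Category.assoc]
            _ = ℓ ≫ w ≫ q₂ ≫ t₂ := by rw [hkkb]
            _ = (ℓ ≫ w ≫ q₂) ≫ t₂ := by simp only [Category.assoc]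
            _ = (w₂ ≫ κ₂) ≫ t₂ := by rw [hw₂2]
            _ = w₂ ≫ κ₂ ≫ t₂ := by rw [Category.assoc]
            _ = w₂ ≫ k₂ := by rw [hκt₂]
      refine hKb.hom_ext ?_ ?_
      · rw [hva, hKb.lift_fst]
      · rw [hvb, hKb.lift_snd]
  have hFPCfinal : IsFinalPullbackComplement (q₁ ≫ j₁) m₂₁ kk (a ≫ i₁') := ⟨hBase, hUniv⟩
  -- the pushout part: pull hpo₁ back along i₂' to get a covering of Kbar₂
  let pm : pullback m₁star i₂' ⟶ O₁ := pullback.fst m₁star i₂'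
  let pk : pullback m₁star i₂' ⟶ Kbar₂ := pullback.snd m₁star i₂'
  have dPO : IsPullback pm pk m₁star i₂' := IsPullback.of_hasPullback m₁star i₂'
  let rW : pullback k₁ a ⟶ K₁ := pullback.fst k₁ a
  let gO : pullback k₁ a ⟶ pullback o₁' i₂' := pullback.snd k₁ a
  have dW2 : IsPullback rW gO k₁ a := IsPullback.of_hasPullback k₁ a
  have hfOw : (rW ≫ o₁) ≫ m₁star = (gO ≫ b) ≫ i₂' := by
    calc (rW ≫ o₁) ≫ m₁star = rW ≫ o₁ ≫ m₁star := by rw [Category.assoc]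
      _ = rW ≫ k₁ ≫ o₁' := by rw [hpo₁.w]
      _ = (rW ≫ k₁) ≫ o₁' := by rw [← Category.assoc]
      _ = (gO ≫ a) ≫ o₁' := by rw [dW2.w]
      _ = gO ≫ a ≫ o₁' := by rw [Category.assoc]
      _ = gO ≫ b ≫ i₂' := by rw [hKb.w]
      _ = (gO ≫ b) ≫ i₂' := by rw [← Category.assoc]
  let fO : pullback k₁ a ⟶ pullback m₁star i₂' := dPO.lift (rW ≫ o₁) (gO ≫ b) hfOw
  have hfO1 : fO ≫ pm = rW ≫ o₁ := dPO.lift_fst _ _ _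
  have hfO2 : fO ≫ pk = gO ≫ b := dPO.lift_snd _ _ _
  have hbig2 : IsPullback (fO ≫ pk) rW i₂' (o₁ ≫ m₁star) := by
    have h0 := (dW2.flip).paste_horiz hKb.flip
    rw [← hpo₁.w, ← hfO2] at h0
    exact h0
  have hfface2 : IsPullback fO rW pm o₁ := IsPullback.of_right hbig2 hfO1 dPO.flip
  have hCov : IsPushout fO gO pk b :=
    SqPO.vkStability hpo₁ fO gO pk b rW pm a i₂' hfface2 dW2.flip dPO.flip hKb.flip ⟨hfO2⟩
  have hlamw : pk ≫ i₂' = (pm ≫ m₁') ≫ n := by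
    calc pk ≫ i₂' = pm ≫ m₁star := dPO.w.symm
      _ = pm ≫ m₁' ≫ n := by rw [hm₁n]
      _ = (pm ≫ m₁') ≫ n := by rw [← Category.assoc]
  let lO : pullback m₁star i₂' ⟶ pullback i₂' n := hK₂c.lift pk (pm ≫ m₁') hlamw
  have hlO1 : lO ≫ t₂ = pk := hK₂c.lift_fst _ _ _
  -- the square S3 is a pullback
  have hS3pb : IsPullback q₂ kk t₂ b := by
    refine SqPO.mkIsPullback' hkkb.symm ?_
    intro T pT qT h
    have hc₁w : (qT ≫ a) ≫ o₁' = (pT ≫ ν₂) ≫ n := by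
      calc (qT ≫ a) ≫ o₁' = qT ≫ a ≫ o₁' := by rw [Category.assoc]
        _ = qT ≫ b ≫ i₂' := by rw [hKb.w]
        _ = (qT ≫ b) ≫ i₂' := by rw [← Category.assoc]
        _ = (pT ≫ t₂) ≫ i₂' := by rw [← h]
        _ = pT ≫ t₂ ≫ i₂' := by rw [Category.assoc]
        _ = pT ≫ ν₂ ≫ n := by rw [hK₂c.w]
        _ = (pT ≫ ν₂) ≫ n := by rw [← Category.assoc]
    let c₁ : T ⟶ pullback o₁' n := hK₁c.lift (qT ≫ a) (pT ≫ ν₂) hc₁w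
    have hc₁1 : c₁ ≫ u₁ = qT ≫ a := hK₁c.lift_fst _ _ _
    have hc₁2 : c₁ ≫ ν₁ = pT ≫ ν₂ := hK₁c.lift_snd _ _ _
    let l : T ⟶ pullback ν₂ ν₁ := hK₂₁.lift pT c₁ hc₁2.symm
    have hl1 : l ≫ q₂ = pT := hK₂₁.lift_fst _ _ _
    have hl2 : l ≫ q₁ = c₁ := hK₂₁.lift_snd _ _ _
    refine ⟨l, ⟨hl1, ?_⟩, ?_⟩
    · refine hKb.hom_ext ?_ ?_
      · calc (l ≫ kk) ≫ a = l ≫ kk ≫ a := by rw [Category.assoc]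
          _ = l ≫ q₁ ≫ u₁ := by rw [hkka]
          _ = (l ≫ q₁) ≫ u₁ := by rw [← Category.assoc]
          _ = c₁ ≫ u₁ := by rw [hl2]
          _ = qT ≫ a := hc₁1
      · calc (l ≫ kk) ≫ b = l ≫ kk ≫ b := by rw [Category.assoc]
          _ = l ≫ q₂ ≫ t₂ := by rw [hkkb]
          _ = (l ≫ q₂) ≫ t₂ := by rw [← Category.assoc]
          _ = pT ≫ t₂ := by rw [hl1]
          _ = qT ≫ b := h
    · intro v ⟨hv1, hv2⟩
      refine hK₂₁.hom_ext (by rw [hv1, hl1]) ?_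
      refine hK₁c.hom_ext ?_ ?_
      · calc (v ≫ q₁) ≫ u₁ = v ≫ q₁ ≫ u₁ := by rw [Category.assoc]
          _ = v ≫ kk ≫ a := by rw [← hkka]
          _ = (v ≫ kk) ≫ a := by rw [← Category.assoc]
          _ = qT ≫ a := by rw [hv2]
          _ = c₁ ≫ u₁ := hc₁1.symm
          _ = (l ≫ q₁) ≫ u₁ := by rw [hl2]
      · calc (v ≫ q₁) ≫ ν₁ = v ≫ q₁ ≫ ν₁ := by rw [Category.assoc]
          _ = v ≫ q₂ ≫ ν₂ := by rw [hK₂₁.w]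
          _ = (v ≫ q₂) ≫ ν₂ := by rw [← Category.assoc]
          _ = pT ≫ ν₂ := by rw [hv1]
          _ = c₁ ≫ ν₁ := hc₁2.symm
          _ = (l ≫ q₁) ≫ ν₁ := by rw [hl2]
  -- the square S3 is a pushout (via balancedness)
  let zl : pullback i₂' n ⟶ pushout q₂ kk := pushout.inl q₂ kk
  let zr : pullback o₁' i₂' ⟶ pushout q₂ kk := pushout.inr q₂ kk
  have hZ : IsPushout q₂ kk zl zr := IsPushout.of_hasPushout q₂ kk
  haveI hzlm : Mono zl := Adhesive.mono_of_isPushout_of_mono_right hZ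
  haveI hzrm : Mono zr := Adhesive.mono_of_isPushout_of_mono_left hZ
  let g0 : pushout q₂ kk ⟶ Kbar₂ := hZ.desc t₂ b hkkb.symm
  have hzl : zl ≫ g0 = t₂ := hZ.inl_desc _ _ _
  have hzr : zr ≫ g0 = b := hZ.inr_desc _ _ _
  haveI hg0epi : Epi g0 := by
    constructor
    intro W φ ψ hφψ
    have ht : t₂ ≫ φ = t₂ ≫ ψ := by
      calc t₂ ≫ φ = (zl ≫ g0) ≫ φ := by rw [hzl]
        _ = zl ≫ g0 ≫ φ := by rw [Category.assoc]
        _ = zl ≫ g0 ≫ ψ := by rw [hφψ]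
        _ = (zl ≫ g0) ≫ ψ := by rw [← Category.assoc]
        _ = t₂ ≫ ψ := by rw [hzl]
    have hb : b ≫ φ = b ≫ ψ := by
      calc b ≫ φ = (zr ≫ g0) ≫ φ := by rw [hzr]
        _ = zr ≫ g0 ≫ φ := by rw [Category.assoc]
        _ = zr ≫ g0 ≫ ψ := by rw [hφψ]
        _ = (zr ≫ g0) ≫ ψ := by rw [← Category.assoc]
        _ = b ≫ ψ := by rw [hzr]
    refine hCov.hom_ext ?_ hb
    calc pk ≫ φ = (lO ≫ t₂) ≫ φ := by rw [hlO1]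
      _ = lO ≫ t₂ ≫ φ := by rw [Category.assoc]
      _ = lO ≫ t₂ ≫ ψ := by rw [ht]
      _ = (lO ≫ t₂) ≫ ψ := by rw [← Category.assoc]
      _ = pk ≫ ψ := by rw [hlO1]
  haveI hg0mono : Mono g0 :=
    heu q₂ kk zl zr t₂ b g0 hq₂m hkkm hzlm hzrm ht₂m hbm hZ hS3pb hzl hzr
  haveI hg0iso : IsIso g0 := isIso_of_mono_of_epi g0
  have hS3po : IsPushout q₂ kk t₂ b := by
    refine hZ.of_iso (Iso.refl _) (Iso.refl _) (Iso.refl _) (asIso g0) ?_ ?_ ?_ ?_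
    · simp
    · simp
    · simpa using hzl
    · simpa using hzr
  -- the comatch mm and the right-hand pushout square
  have hmmw : o₂ ≫ m₂star = κ₂ ≫ t₂ ≫ o₂' := by
    rw [← Category.assoc, hκt₂, hpo₂.w]
  let mm : pushout o₂ κ₂ ⟶ X₂ := hO.desc m₂star (t₂ ≫ o₂') hmmw
  have hocd : oc ≫ mm = m₂star := hO.inl_desc _ _ _
  have hkcd : kc ≫ mm = t₂ ≫ o₂' := hO.inr_desc _ _ _
  have hbigpo : IsPushout (κ₂ ≫ t₂) o₂ o₂' (oc ≫ mm) := by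
    rw [hκt₂, hocd]; exact hpo₂.flip
  have hR : IsPushout t₂ kc o₂' mm := IsPushout.of_left hbigpo hkcd.symm hO.flip
  have hFinal : IsPushout (q₂ ≫ kc) kk mm (b ≫ o₂') := hS3po.paste_horiz hR.flip
  exact ⟨pushout s₂ s₁, m₂', m₁', hN, pullback i₂' n, κ₂, ν₂, hfpc₂',
    pushout o₂ κ₂, oc, kc, hO, pullback o₁' n, κ₁, ν₁, hK1po,
    pushout κ₁ i₁, j₁, p₁, hI, pullback ν₂ ν₁, q₂, q₁, hK₂₁,
    m₂₁, hm₂₁mono, pullback o₁' i₂', kk, a ≫ i₁', hFPCfinal,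
    X₂, mm, b ≫ o₂', hFinal, ⟨Iso.refl X₂⟩⟩
end

section
/- (SqPO concurrency, analysis, for rules without conditions.) Let C be an adhesive, balanced category with epi–mono factorizations, effective unions, a strict initial object whose morphisms out of it are monomorphisms, and in which every composable pair of monomorphisms admits a final pullback complement. Let r₁ = (O₁ ⟵o₁ K₁ ⟶i₁ I₁) and r₂ = (O₂ ⟵o₂ K₂ ⟶i₂ I₂) be linear rules, and let μ₂₁ = (I₂ ⟵m₂ M₂₁ ⟶m₁ O₁) be a span of monomorphisms for which the SqPO-composite rule r₂₁ = r₂ ▷μ₂₁◁ r₁ = (O₂₁ ⟵ K₂₁ ⟶ I₂₁) exists. Then for every object X₀ and every monomorphism m₂₁ : I₂₁ ⟶ X₀, there exist monomorphisms m₁ : I₁ ⟶ X₀ and m₂ : I₂ ⟶ X₁, where X₁ is the result of the SqPO derivation of X₀ along r₁ at m₁, such that the result X₂ of the SqPO derivation of X₁ along r₂ at m₂ is isomorphic to the result of the SqPO derivation of X₀ along r₂₁ at m₂₁. -/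
open CategoryTheory CategoryTheory.Limits

universe v u

section AuxiliaryLemmas

variable {𝒞 : Type u} [Category.{v} 𝒞]

/-- Build an `IsPullback` from an explicit universal property. -/
theorem isPullback_of_universal {P A B Z : 𝒞} {fst : P ⟶ A} {snd : P ⟶ B} {f : A ⟶ Z} {g : B ⟶ Z}
    (comm : fst ≫ f = snd ≫ g)
    (lift : ∀ {T : 𝒞} (u : T ⟶ A) (v : T ⟶ B), u ≫ f = v ≫ g → (T ⟶ P))
    (fac₁ : ∀ {T : 𝒞} (u : T ⟶ A) (v : T ⟶ B) (h : u ≫ f = v ≫ g), lift u v h ≫ fst = u)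
    (fac₂ : ∀ {T : 𝒞} (u : T ⟶ A) (v : T ⟶ B) (h : u ≫ f = v ≫ g), lift u v h ≫ snd = v)
    (uniq : ∀ {T : 𝒞} (u : T ⟶ A) (v : T ⟶ B) (h : u ≫ f = v ≫ g) (m : T ⟶ P),
      m ≫ fst = u → m ≫ snd = v → m = lift u v h) :
    IsPullback fst snd f g :=
  IsPullback.of_isLimit (PullbackCone.IsLimit.mk comm
    (fun s => lift s.fst s.snd s.condition)
    (fun s => fac₁ _ _ _) (fun s => fac₂ _ _ _)
    (fun s m h₁ h₂ => uniq _ _ _ m h₁ h₂))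

/-- In a pullback square, the projection opposite to a mono is a mono. -/
theorem pb_mono_fst {P A B Z : 𝒞} {fst : P ⟶ A} {snd : P ⟶ B} {f : A ⟶ Z} {g : B ⟶ Z}
    (h : IsPullback fst snd f g) [Mono g] : Mono fst := by
  constructor
  intro T u v huv
  have h2 : u ≫ snd = v ≫ snd := by
    apply (cancel_mono g).mp
    simp only [Category.assoc]
    rw [← h.w, ← Category.assoc, huv, Category.assoc]
  exact h.hom_ext huv h2

theorem pb_mono_snd {P A B Z : 𝒞} {fst : P ⟶ A} {snd : P ⟶ B} {f : A ⟶ Z} {g : B ⟶ Z}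
    (h : IsPullback fst snd f g) [Mono f] : Mono snd :=
  pb_mono_fst h.flip

/-- Cancel a mono out of the second projection of a pullback square. -/
theorem pb_cancel_mono {P A B' B Z : 𝒞} {f : P ⟶ A} {g : P ⟶ B'} {w : B' ⟶ B}
    {h : A ⟶ Z} {i : B ⟶ Z} [Mono w]
    (hbig : IsPullback f (g ≫ w) h i) : IsPullback f g h (w ≫ i) := by
  refine isPullback_of_universal ?_ (fun u v huv => hbig.lift u (v ≫ w)
    (by rw [Category.assoc]; exact huv)) ?_ ?_ ?_
  · rw [hbig.w, Category.assoc]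
  · intro T u v huv; exact hbig.lift_fst _ _ _
  · intro T u v huv
    have h2 := hbig.lift_snd u (v ≫ w) (by rw [Category.assoc]; exact huv)
    rw [← Category.assoc] at h2
    exact (cancel_mono w).mp h2
  · intro T u v huv m h₁ h₂
    apply hbig.hom_ext
    · rw [hbig.lift_fst]; exact h₁
    · rw [hbig.lift_snd, ← Category.assoc, h₂]

/-- The complement of a final pullback complement of a mono along a mono is a mono. -/
theorem fpc_mono [Adhesive 𝒞] {A B C D : 𝒞} {a : A ⟶ B} {c : B ⟶ C} {b : A ⟶ D} {d : D ⟶ C}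
    [Mono a] [Mono c] (hF : IsFinalPullbackComplement a c b d) : Mono d := by
  constructor
  intro Z u v huv
  haveI : HasPullback c (v ≫ d) := Adhesive.hasPullback_of_mono_left c (v ≫ d)
  obtain ⟨R, π₁, π₂, hP⟩ : ∃ (R : 𝒞) (π₁ : R ⟶ B) (π₂ : R ⟶ Z), IsPullback π₁ π₂ c (v ≫ d) :=
    ⟨_, _, _, IsPullback.of_hasPullback c (v ≫ d)⟩
  have hgu : π₁ ≫ c = (π₂ ≫ u) ≫ d := by
    rw [hP.w, ← huv, Category.assoc]
  have hgv : π₁ ≫ c = (π₂ ≫ v) ≫ d := by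
    rw [hP.w, Category.assoc]
  have hguv : hF.isPullback.lift _ _ hgu = hF.isPullback.lift _ _ hgv := by
    apply (cancel_mono a).mp
    rw [hF.isPullback.lift_fst, hF.isPullback.lift_fst]
  obtain ⟨wS, _, huniq⟩ := hF.universal π₁ π₂ (v ≫ d) hP
    (hF.isPullback.lift _ _ hgu) (hF.isPullback.lift_fst _ _ hgu)
  have h1 : u = wS := huniq u ⟨huv, (hF.isPullback.lift_snd _ _ hgu).symm⟩
  have h2 : v = wS := by
    refine huniq v ⟨rfl, ?_⟩
    rw [hguv]
    exact (hF.isPullback.lift_snd _ _ hgv).symm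
  rw [h1, h2]

/-- Vertical composition of final pullback complements. -/
theorem fpc_vcomp [Adhesive 𝒞] {A B C C' D D' : 𝒞} {a : A ⟶ B} {c : B ⟶ C} {b : A ⟶ D}
    {d : D ⟶ C} {c' : C ⟶ C'} {b' : D ⟶ D'} {d' : D' ⟶ C'} [Mono c'] [Mono d']
    (h₁ : IsFinalPullbackComplement a c b d) (h₂ : IsFinalPullbackComplement d c' b' d') :
    IsFinalPullbackComplement a (c ≫ c') (b ≫ b') d' := by
  constructor
  · exact h₁.isPullback.paste_vert h₂.isPullback
  · intro P Q x y z hpb w hw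
    haveI : HasPullback c' z := Adhesive.hasPullback_of_mono_left c' z
    have hR : IsPullback (pullback.fst c' z) (pullback.snd c' z) c' z :=
      IsPullback.of_hasPullback c' z
    have hξpf : (x ≫ c) ≫ c' = y ≫ z := by rw [Category.assoc, hpb.w]
    have hξ₁ : hR.lift (x ≫ c) y hξpf ≫ pullback.fst c' z = x ≫ c := hR.lift_fst _ _ _
    have hξ₂ : hR.lift (x ≫ c) y hξpf ≫ pullback.snd c' z = y := hR.lift_snd _ _ _
    have htop : IsPullback x (hR.lift (x ≫ c) y hξpf) c (pullback.fst c' z) := by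
      have s := hpb
      rw [← hξ₂] at s
      exact IsPullback.of_bot s hξ₁.symm hR
    obtain ⟨ω, ⟨hω1, hω2⟩, uniq₁⟩ := h₁.universal x (hR.lift (x ≫ c) y hξpf)
      (pullback.fst c' z) htop w hw
    obtain ⟨W, ⟨hW1, hW2⟩, uniq₂⟩ := h₂.universal (pullback.fst c' z) (pullback.snd c' z)
      z hR ω hω1
    refine ⟨W, ⟨hW1, ?_⟩, ?_⟩
    · rw [← hξ₂, Category.assoc, hW2, ← Category.assoc, hω2]
      simp only [Category.assoc]
    · intro V hV
      obtain ⟨hV1, hV2⟩ := hV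
      refine uniq₂ V ⟨hV1, ?_⟩
      apply (cancel_mono d').mp
      rw [Category.assoc, hV1, Category.assoc, ← h₂.isPullback.w, ← Category.assoc, hω1, hR.w]

/-- Horizontal composition of final pullback complements. -/
theorem fpc_hcomp {A₀ A B C D D₀ : 𝒞} {a : A ⟶ B} {c : B ⟶ C} {b : A ⟶ D} {d : D ⟶ C}
    {a₀ : A₀ ⟶ A} {b₀ : A₀ ⟶ D₀} {d₀ : D₀ ⟶ D} [Mono a]
    (h₁ : IsFinalPullbackComplement a c b d) (h₂ : IsFinalPullbackComplement a₀ b b₀ d₀) :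
    IsFinalPullbackComplement (a₀ ≫ a) c b₀ (d₀ ≫ d) := by
  constructor
  · exact h₂.isPullback.paste_horiz h₁.isPullback
  · intro P Q x y z hpb w hw
    have hw₁ : (w ≫ a₀) ≫ a = x := by rw [Category.assoc]; exact hw
    obtain ⟨u, ⟨hu1, hu2⟩, uniq₁⟩ := h₁.universal x y z hpb (w ≫ a₀) hw₁
    have hmid : IsPullback (w ≫ a₀) y b u := by
      refine isPullback_of_universal hu2.symm
        (fun s t hst => hpb.lift (s ≫ a) t
          (by rw [Category.assoc, h₁.isPullback.w, ← Category.assoc, hst, Category.assoc, hu1]))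
        ?_ ?_ ?_
      · intro T s t hst
        apply (cancel_mono a).mp
        rw [Category.assoc, hw₁]
        exact hpb.lift_fst _ _ _
      · intro T s t hst; exact hpb.lift_snd _ _ _
      · intro T s t hst m hm1 hm2
        apply hpb.hom_ext
        · rw [hpb.lift_fst, ← hm1, Category.assoc, hw₁]
        · rw [hpb.lift_snd]; exact hm2
    obtain ⟨W, ⟨hW1, hW2⟩, uniq₂⟩ := h₂.universal (w ≫ a₀) y u hmid w rfl
    refine ⟨W, ⟨?_, hW2⟩, ?_⟩
    · rw [← Category.assoc, hW1, hu1]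
    · intro V hV
      obtain ⟨hV1, hV2⟩ := hV
      have hVd : (V ≫ d₀) ≫ d = z := by rw [Category.assoc]; exact hV1
      have hVy : y ≫ V ≫ d₀ = (w ≫ a₀) ≫ b := by
        rw [← Category.assoc, hV2, Category.assoc, ← h₂.isPullback.w, ← Category.assoc]
      have hVu := uniq₁ (V ≫ d₀) ⟨hVd, hVy⟩
      exact uniq₂ V ⟨hVu, hV2⟩

/-- Final pullback complements are stable under pullback. -/
theorem fpc_stab {A B C D A' B' C' D' : 𝒞}
    {a : A ⟶ B} {c : B ⟶ C} {b : A ⟶ D} {d : D ⟶ C}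
    {a' : A' ⟶ B'} {c' : B' ⟶ C'} {b' : A' ⟶ D'} {d' : D' ⟶ C'}
    {φ : C' ⟶ C} {πA : A' ⟶ A} {πB : B' ⟶ B} {πD : D' ⟶ D}
    (hF : IsFinalPullbackComplement a c b d)
    (hB : IsPullback πB c' c φ) (hD : IsPullback πD d' d φ)
    (hA : IsPullback a' πA πB a)
    (comm1 : πA ≫ b = b' ≫ πD) (comm2 : a' ≫ c' = b' ≫ d') :
    IsFinalPullbackComplement a' c' b' d' := by
  constructor
  · refine isPullback_of_universal comm2
      (fun u v huv => hA.lift u (hF.isPullback.lift (u ≫ πB) (v ≫ πD)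
        (by rw [Category.assoc, hB.w, Category.assoc, hD.w, ← Category.assoc, huv,
          Category.assoc]))
        (by rw [hF.isPullback.lift_fst])) ?_ ?_ ?_
    · intro T u v huv; exact hA.lift_fst _ _ _
    · intro T u v huv
      apply hD.hom_ext
      · rw [Category.assoc, ← comm1, ← Category.assoc, hA.lift_snd,
          hF.isPullback.lift_snd]
      · rw [Category.assoc, ← comm2, ← Category.assoc, hA.lift_fst, huv]
    · intro T u v huv m hm1 hm2
      apply hA.hom_ext
      · rw [hA.lift_fst]; exact hm1
      · rw [hA.lift_snd]
        apply hF.isPullback.hom_ext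
        · rw [hF.isPullback.lift_fst, Category.assoc, ← hA.w, ← Category.assoc, hm1]
        · rw [hF.isPullback.lift_snd, Category.assoc, comm1, ← Category.assoc, hm2]
  · intro P Q x y z hpb w hw
    have big : IsPullback (x ≫ πB) y c (z ≫ φ) := hpb.paste_horiz hB
    have hwP : (w ≫ πA) ≫ a = x ≫ πB := by
      rw [Category.assoc, ← hA.w, ← Category.assoc, hw]
    obtain ⟨u, ⟨hu1, hu2⟩, uniq₁⟩ := hF.universal (x ≫ πB) y (z ≫ φ) big (w ≫ πA) hwP
    refine ⟨hD.lift u z hu1, ⟨hD.lift_snd u z hu1, ?_⟩, ?_⟩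
    · apply hD.hom_ext
      · rw [Category.assoc, hD.lift_fst, hu2, Category.assoc, comm1, ← Category.assoc]
      · rw [Category.assoc, hD.lift_snd, ← hpb.w, Category.assoc, ← comm2,
          ← Category.assoc, hw]
    · intro V hV
      obtain ⟨hV1, hV2⟩ := hV
      have hVd : (V ≫ πD) ≫ d = z ≫ φ := by
        rw [Category.assoc, hD.w, ← Category.assoc, hV1]
      have hVy : y ≫ V ≫ πD = (w ≫ πA) ≫ b := by
        rw [← Category.assoc, hV2, Category.assoc, ← comm1, ← Category.assoc]
      have hVu := uniq₁ (V ≫ πD) ⟨hVd, hVy⟩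
      apply hD.hom_ext
      · rw [hD.lift_fst]; exact hVu
      · rw [hD.lift_snd]; exact hV1

end AuxiliaryLemmas

section VKLemma

variable {𝒞 : Type u} [Category.{v} 𝒞]

/-- Pushing the match through a pushout square: if `(κ, i, j, p)` is a pushout along a mono
and `(kb, l)` is an FPC of `(j, m)`, then `(κ ≫ kb, l)` is an FPC of `(i, p ≫ m)`. -/
theorem fpc_of_pushout [Adhesive 𝒞] {K Kc I I21 L X0 : 𝒞}
    {κ : K ⟶ Kc} {i : K ⟶ I} {j : Kc ⟶ I21} {p : I ⟶ I21}
    {m : I21 ⟶ X0} {kb : Kc ⟶ L} {l : L ⟶ X0}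
    [Mono κ] [Mono i] [Mono j] [Mono m] [Mono l]
    (hPO : IsPushout κ i j p)
    (hF : IsFinalPullbackComplement j m kb l) :
    IsFinalPullbackComplement i (p ≫ m) (κ ≫ kb) l := by
  have hPOpb : IsPullback κ i j p := Adhesive.isPullback_of_isPushout_of_mono_left hPO
  constructor
  · exact hPOpb.flip.paste_vert hF.isPullback
  · intro P Q x y z hpb w hw
    haveI : HasPullback m z := Adhesive.hasPullback_of_mono_left m z
    obtain ⟨P', x', y', hP'⟩ : ∃ (P' : 𝒞) (x' : P' ⟶ I21) (y' : P' ⟶ Q),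
        IsPullback x' y' m z := ⟨_, _, _, IsPullback.of_hasPullback m z⟩
    have hepf : (x ≫ p) ≫ m = y ≫ z := by rw [Category.assoc]; exact hpb.w
    obtain ⟨e, he₁, he₂⟩ : ∃ e : P ⟶ P', e ≫ x' = x ≫ p ∧ e ≫ y' = y :=
      ⟨hP'.lift (x ≫ p) y hepf, hP'.lift_fst _ _ _, hP'.lift_snd _ _ _⟩
    -- `e` realises `P` as the pullback of `p` along `x'`
    have hi' : IsPullback e x x' p := by
      refine isPullback_of_universal (by rw [he₁]) (fun u v huv => hpb.lift v (u ≫ y')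
        (by rw [← Category.assoc, ← huv, Category.assoc, hP'.w, Category.assoc])) ?_ ?_ ?_
      · intro T u v huv
        apply hP'.hom_ext
        · rw [Category.assoc, he₁, ← Category.assoc, hpb.lift_fst, huv]
        · rw [Category.assoc, he₂, hpb.lift_snd]
      · intro T u v huv; exact hpb.lift_fst _ _ _
      · intro T u v huv mo hm1 hm2
        apply hpb.hom_ext
        · rw [hpb.lift_fst]; exact hm2
        · rw [hpb.lift_snd, ← hm1, Category.assoc, he₂]
    -- pull the pushout square back along `x' : P' ⟶ I21`
    haveI : HasPullback j x' := Adhesive.hasPullback_of_mono_left j x'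
    obtain ⟨Pk, αX, hk, hPk⟩ : ∃ (Pk : 𝒞) (αX : Pk ⟶ Kc) (hk : Pk ⟶ P'),
        IsPullback αX hk j x' := ⟨_, _, _, IsPullback.of_hasPullback j x'⟩
    haveI : HasPullback κ αX := Adhesive.hasPullback_of_mono_left κ αX
    obtain ⟨P₀, αW, f', hP₀⟩ : ∃ (P₀ : 𝒞) (αW : P₀ ⟶ K) (f' : P₀ ⟶ Pk),
        IsPullback αW f' κ αX := ⟨_, _, _, IsPullback.of_hasPullback κ αX⟩
    have hg'pf : (αW ≫ i) ≫ p ≫ m = (f' ≫ hk ≫ y') ≫ z := by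
      simp only [Category.assoc]
      rw [← reassoc_of% hPO.w, reassoc_of% hP₀.w, reassoc_of% hPk.w, hP'.w]
    obtain ⟨g', hg'x, hg'y⟩ : ∃ g' : P₀ ⟶ P, g' ≫ x = αW ≫ i ∧ g' ≫ y = f' ≫ hk ≫ y' :=
      ⟨hpb.lift (αW ≫ i) (f' ≫ hk ≫ y') hg'pf, hpb.lift_fst _ _ _, hpb.lift_snd _ _ _⟩
    have hg : IsPullback g' αW x i := by
      refine isPullback_of_universal hg'x
        (fun u v huv => hP₀.lift v (hPk.lift (v ≫ κ) (u ≫ e)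
            (by rw [Category.assoc, hPO.w, ← reassoc_of% huv, ← he₁, Category.assoc]))
          (by rw [hPk.lift_fst]))
        ?_ ?_ ?_
      · intro T u v huv
        apply hpb.hom_ext
        · rw [Category.assoc, hg'x, ← Category.assoc, hP₀.lift_fst, huv]
        · rw [Category.assoc, hg'y, ← Category.assoc, hP₀.lift_snd, ← Category.assoc,
            hPk.lift_snd, Category.assoc, he₂]
      · intro T u v huv; exact hP₀.lift_fst _ _ _
      · intro T u v huv mo hm1 hm2
        apply hP₀.hom_ext
        · rw [hP₀.lift_fst]; exact hm2
        · rw [hP₀.lift_snd]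
          apply hPk.hom_ext
          · rw [hPk.lift_fst, Category.assoc, ← hP₀.w, ← Category.assoc, hm2]
          · rw [hPk.lift_snd]
            apply hP'.hom_ext
            · calc ((mo ≫ f') ≫ hk) ≫ x'
                  = mo ≫ f' ≫ αX ≫ j := by
                    rw [Category.assoc, Category.assoc, ← hPk.w]
                _ = mo ≫ αW ≫ κ ≫ j := by rw [← reassoc_of% hP₀.w]
                _ = mo ≫ αW ≫ i ≫ p := by rw [hPO.w]
                _ = v ≫ i ≫ p := by rw [reassoc_of% hm2]
                _ = u ≫ x ≫ p := by rw [← reassoc_of% huv]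
                _ = (u ≫ e) ≫ x' := by rw [Category.assoc, he₁]
            · calc ((mo ≫ f') ≫ hk) ≫ y'
                  = mo ≫ f' ≫ hk ≫ y' := by rw [Category.assoc, Category.assoc]
                _ = mo ≫ g' ≫ y := by rw [← hg'y]
                _ = u ≫ y := by rw [← Category.assoc, hm1]
                _ = (u ≫ e) ≫ y' := by rw [Category.assoc, he₂]
    have wcs : CommSq f' g' hk e := by
      constructor
      apply hP'.hom_ext
      · calc (f' ≫ hk) ≫ x'
            = f' ≫ αX ≫ j := by rw [Category.assoc, ← hPk.w]
          _ = αW ≫ κ ≫ j := by rw [← reassoc_of% hP₀.w]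
          _ = αW ≫ i ≫ p := by rw [hPO.w]
          _ = g' ≫ x ≫ p := by rw [← reassoc_of% hg'x]
          _ = (g' ≫ e) ≫ x' := by rw [Category.assoc, he₁]
      · calc (f' ≫ hk) ≫ y'
            = g' ≫ y := by rw [Category.assoc, ← hg'y]
          _ = (g' ≫ e) ≫ y' := by rw [Category.assoc, he₂]
    have htoppo : IsPushout f' g' hk e :=
      (Adhesive.van_kampen hPO f' g' hk e αW αX x x' hP₀.flip hg ⟨hPk.w.symm⟩ ⟨he₁⟩ wcs).mpr
        ⟨hPk.flip, hi'⟩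
    have hg'w : g' ≫ w = αW := by
      apply (cancel_mono i).mp
      rw [Category.assoc, hw, hg'x]
    obtain ⟨w', hw'₁, hw'₂⟩ : ∃ w' : P' ⟶ Kc, hk ≫ w' = αX ∧ e ≫ w' = w ≫ κ :=
      ⟨htoppo.desc αX (w ≫ κ) (by rw [← hP₀.w, ← hg'w, Category.assoc]),
        htoppo.inl_desc _ _ _, htoppo.inr_desc _ _ _⟩
    have hw'j : w' ≫ j = x' := by
      apply htoppo.hom_ext
      · rw [← Category.assoc, hw'₁, hPk.w]
      · rw [← Category.assoc, hw'₂, Category.assoc, hPO.w, ← Category.assoc, hw, ← he₁]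
    obtain ⟨W, ⟨hW1, hW2⟩, uniqF⟩ := hF.universal x' y' z hP' w' hw'j
    refine ⟨W, ⟨hW1, ?_⟩, ?_⟩
    · rw [← he₂, Category.assoc, hW2, ← Category.assoc, hw'₂, Category.assoc]
    · intro V hV
      obtain ⟨hV1, hV2⟩ := hV
      have hyV : y' ≫ V = w' ≫ kb := by
        apply htoppo.hom_ext
        · apply (cancel_mono l).mp
          calc (hk ≫ y' ≫ V) ≫ l
              = hk ≫ y' ≫ z := by rw [Category.assoc, Category.assoc, hV1]
            _ = hk ≫ x' ≫ m := by rw [← hP'.w]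
            _ = αX ≫ j ≫ m := by rw [← reassoc_of% hPk.w]
            _ = αX ≫ kb ≫ l := by rw [hF.isPullback.w]
            _ = (hk ≫ w' ≫ kb) ≫ l := by
                rw [← hw'₁]; simp only [Category.assoc]
        · calc e ≫ y' ≫ V
              = y ≫ V := by rw [reassoc_of% he₂]
            _ = w ≫ κ ≫ kb := by rw [hV2]
            _ = e ≫ w' ≫ kb := by rw [← reassoc_of% hw'₂]
      exact uniqF V ⟨hV1, hyV⟩

end VKLemma

/-- **SqPO concurrency theorem, analysis direction (rules without conditions).**
In an adhesive, balanced category with epi–mono factorizations, effective unions, a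
strict initial object whose outgoing morphisms are monomorphisms, and in which every
composable pair of monomorphisms admits a final pullback complement: given linear rules
`r₁`, `r₂`, a span of monomorphisms `μ₂₁ = (I₂ ⟵s₂ M₂₁ ⟶s₁ O₁)` for which the
SqPO-composite rule `r₂₁ = r₂ ▷μ₂₁◁ r₁ = (O₂₁ ⟵ q₂≫kc K₂₁ ⟶ q₁≫j₁ I₂₁)` exists, and
a monomorphism `m₂₁ : I₂₁ ⟶ X₀`, there exist monomorphisms `m₁ : I₁ ⟶ X₀` and
`m₂ : I₂ ⟶ X₁` (where `X₁` results from the SqPO derivation of `X₀` along `r₁` at `m₁`)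
such that the result `X₂` of the SqPO derivation of `X₁` along `r₂` at `m₂` is
isomorphic to the result of the SqPO derivation of `X₀` along `r₂₁` at `m₂₁`. -/
theorem sqpo_concurrency_analysis {𝒞 : Type u} [Category.{v} 𝒞]
    [Adhesive 𝒞] [Balanced 𝒞] [HasInitial 𝒞] [HasStrictInitialObjects 𝒞]
    [InitialMonoClass 𝒞]
    (hfact : HasEpiMonoFactorizations 𝒞) (heu : HasEffectiveUnions 𝒞)
    (hFPC : ∀ {A B C : 𝒞} (a : A ⟶ B) (c : B ⟶ C), Mono a → Mono c →
      ∃ (D : 𝒞) (b : A ⟶ D) (d : D ⟶ C), IsFinalPullbackComplement a c b d)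
    -- the two linear rules
    {O₁ K₁ I₁ O₂ K₂ I₂ : 𝒞}
    (o₁ : K₁ ⟶ O₁) (i₁ : K₁ ⟶ I₁) [Mono o₁] [Mono i₁]
    (o₂ : K₂ ⟶ O₂) (i₂ : K₂ ⟶ I₂) [Mono o₂] [Mono i₂]
    -- the span μ₂₁ = (I₂ ⟵s₂ M₂₁ ⟶s₁ O₁) of monomorphisms
    {M₂₁ : 𝒞} (s₂ : M₂₁ ⟶ I₂) (s₁ : M₂₁ ⟶ O₁) [Mono s₂] [Mono s₁]
    -- the data exhibiting the SqPO-composite rule r₂₁ = r₂ ▷μ₂₁◁ r₁: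
    -- (i) pushout N₂₁ of the span (s₂, s₁)
    {N₂₁ : 𝒞} (m₂' : I₂ ⟶ N₂₁) (m₁' : O₁ ⟶ N₂₁)
    (hN : IsPushout s₂ s₁ m₂' m₁')
    -- (ii) FPC of (m₂', i₂)
    {K₂c : 𝒞} (κ₂ : K₂ ⟶ K₂c) (ν₂ : K₂c ⟶ N₂₁)
    (hK₂c : IsFinalPullbackComplement i₂ m₂' κ₂ ν₂)
    -- (iii) pushout O₂₁ of (o₂, κ₂)
    {O₂₁ : 𝒞} (oc : O₂ ⟶ O₂₁) (kc : K₂c ⟶ O₂₁)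
    (hO₂₁ : IsPushout o₂ κ₂ oc kc)
    -- (iv) pushout complement of (o₁, m₁')
    {K₁c : 𝒞} (κ₁ : K₁ ⟶ K₁c) (ν₁ : K₁c ⟶ N₂₁)
    (hPOC : IsPushout o₁ κ₁ m₁' ν₁)
    -- (v) pushout I₂₁ of (κ₁, i₁)
    {I₂₁ : 𝒞} (j₁ : K₁c ⟶ I₂₁) (p₁ : I₁ ⟶ I₂₁)
    (hI₂₁ : IsPushout κ₁ i₁ j₁ p₁)
    -- (vi) pullback K₂₁ of the cospan (ν₂, ν₁)
    {K₂₁ : 𝒞} (q₂ : K₂₁ ⟶ K₂c) (q₁ : K₂₁ ⟶ K₁c)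
    (hK₂₁ : IsPullback q₂ q₁ ν₂ ν₁)
    -- an object X₀ and a monomorphic match of the composite rule
    {X₀ : 𝒞} (m₂₁ : I₂₁ ⟶ X₀) [Mono m₂₁] :
    -- there exist matches m₁, m₂ and SqPO derivations X₀ ⟹[r₁,m₁] X₁ ⟹[r₂,m₂] X₂
    -- such that X₂ is isomorphic to the result of the derivation X₀ ⟹[r₂₁,m₂₁]
    ∃ (m₁ : I₁ ⟶ X₀), Mono m₁ ∧
    ∃ (Kbar₁ : 𝒞) (k₁ : K₁ ⟶ Kbar₁) (i₁' : Kbar₁ ⟶ X₀),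
      IsFinalPullbackComplement i₁ m₁ k₁ i₁' ∧
    ∃ (X₁ : 𝒞) (m₁star : O₁ ⟶ X₁) (o₁' : Kbar₁ ⟶ X₁),
      IsPushout o₁ k₁ m₁star o₁' ∧
    ∃ (m₂ : I₂ ⟶ X₁), Mono m₂ ∧
    ∃ (Kbar₂ : 𝒞) (k₂ : K₂ ⟶ Kbar₂) (i₂' : Kbar₂ ⟶ X₁),
      IsFinalPullbackComplement i₂ m₂ k₂ i₂' ∧
    ∃ (X₂ : 𝒞) (m₂star : O₂ ⟶ X₂) (o₂' : Kbar₂ ⟶ X₂),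
      IsPushout o₂ k₂ m₂star o₂' ∧
    ∃ (Kbar : 𝒞) (kk : K₂₁ ⟶ Kbar) (ii : Kbar ⟶ X₀),
      IsFinalPullbackComplement (q₁ ≫ j₁) m₂₁ kk ii ∧
    ∃ (Y : 𝒞) (mm : O₂₁ ⟶ Y) (oo : Kbar ⟶ Y),
      IsPushout (q₂ ≫ kc) kk mm oo ∧ Nonempty (X₂ ≅ Y) := by
  
  -- basic monomorphisms
  haveI : Mono m₂' := Adhesive.mono_of_isPushout_of_mono_right hN
  haveI : Mono m₁' := Adhesive.mono_of_isPushout_of_mono_left hN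
  have hPOCpb : IsPullback o₁ κ₁ m₁' ν₁ := Adhesive.isPullback_of_isPushout_of_mono_left hPOC
  haveI : Mono κ₁ := pb_mono_snd hPOCpb
  haveI : Mono ν₁ := Adhesive.mono_of_isPushout_of_mono_left hPOC
  haveI : Mono j₁ := Adhesive.mono_of_isPushout_of_mono_right hI₂₁
  haveI : Mono p₁ := Adhesive.mono_of_isPushout_of_mono_left hI₂₁
  haveI : Mono κ₂ := pb_mono_snd hK₂c.isPullback
  haveI : Mono ν₂ := fpc_mono hK₂c
  haveI : Mono q₂ := pb_mono_fst hK₂₁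
  haveI : Mono q₁ := pb_mono_snd hK₂₁
  -- the FPC of (j₁, m₂₁)
  obtain ⟨L, kb, l, hFL⟩ := hFPC j₁ m₂₁ inferInstance inferInstance
  haveI : Mono kb := pb_mono_snd hFL.isPullback
  haveI : Mono l := fpc_mono hFL
  -- first direct derivation
  have hF1 : IsFinalPullbackComplement i₁ (p₁ ≫ m₂₁) (κ₁ ≫ kb) l := fpc_of_pushout hI₂₁ hFL
  haveI : HasPushout o₁ (κ₁ ≫ kb) := Adhesive.hasPushout_of_mono_left _ _
  obtain ⟨X₁, m₁s, o₁', hX₁⟩ : ∃ (X₁ : 𝒞) (m₁s : O₁ ⟶ X₁) (o₁' : L ⟶ X₁),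
      IsPushout o₁ (κ₁ ≫ kb) m₁s o₁' := ⟨_, _, _, IsPushout.of_hasPushout _ _⟩
  haveI : Mono m₁s := Adhesive.mono_of_isPushout_of_mono_right hX₁
  haveI : Mono o₁' := Adhesive.mono_of_isPushout_of_mono_left hX₁
  -- the mediating morphism n : N₂₁ ⟶ X₁
  obtain ⟨n, hn₁, hn₂⟩ : ∃ n : N₂₁ ⟶ X₁, m₁' ≫ n = m₁s ∧ ν₁ ≫ n = kb ≫ o₁' :=
    ⟨hPOC.desc m₁s (kb ≫ o₁') (by rw [hX₁.w, Category.assoc]), hPOC.inl_desc _ _ _,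
      hPOC.inr_desc _ _ _⟩
  have square2 : IsPushout ν₁ kb n o₁' := by
    apply IsPushout.of_top _ hn₂ hPOC
    rw [hn₁]
    exact hX₁
  have square2pb : IsPullback ν₁ kb n o₁' :=
    Adhesive.isPullback_of_isPushout_of_mono_left square2
  have hX₁pb : IsPullback o₁ (κ₁ ≫ kb) m₁s o₁' :=
    Adhesive.isPullback_of_isPushout_of_mono_left hX₁
  have hpb2 : IsPullback o₁ κ₁ m₁s (kb ≫ o₁') := pb_cancel_mono hX₁pb
  have hnmono : Mono n := heu o₁ κ₁ m₁' ν₁ m₁s (kb ≫ o₁') n inferInstance inferInstance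
    inferInstance inferInstance inferInstance (mono_comp _ _) hPOC hpb2 hn₁ hn₂
  haveI := hnmono
  -- FPC of (ν₂, n)
  obtain ⟨K2b, κb, n', hFn⟩ := hFPC ν₂ n inferInstance hnmono
  haveI : Mono κb := pb_mono_snd hFn.isPullback
  haveI : Mono n' := fpc_mono hFn
  -- second direct derivation
  have hF2 : IsFinalPullbackComplement i₂ (m₂' ≫ n) (κ₂ ≫ κb) n' := fpc_vcomp hK₂c hFn
  haveI : HasPushout o₂ (κ₂ ≫ κb) := Adhesive.hasPushout_of_mono_left _ _
  obtain ⟨X₂, m₂s, o₂', hX₂⟩ : ∃ (X₂ : 𝒞) (m₂s : O₂ ⟶ X₂) (o₂' : K2b ⟶ X₂),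
      IsPushout o₂ (κ₂ ≫ κb) m₂s o₂' := ⟨_, _, _, IsPushout.of_hasPushout _ _⟩
  -- the pullback K̄ = K2b ×_{X₁} L
  haveI : HasPullback n' o₁' := Adhesive.hasPullback_of_mono_left n' o₁'
  obtain ⟨Kb, t₂, t₁, hKb⟩ : ∃ (Kb : 𝒞) (t₂ : Kb ⟶ K2b) (t₁ : Kb ⟶ L),
      IsPullback t₂ t₁ n' o₁' := ⟨_, _, _, IsPullback.of_hasPullback n' o₁'⟩
  have hkkpf : (q₂ ≫ κb) ≫ n' = (q₁ ≫ kb) ≫ o₁' := by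
    rw [Category.assoc, ← hFn.isPullback.w, reassoc_of% hK₂₁.w, hn₂, ← Category.assoc]
  obtain ⟨kk, hkk₂, hkk₁⟩ : ∃ kk : K₂₁ ⟶ Kb, kk ≫ t₂ = q₂ ≫ κb ∧ kk ≫ t₁ = q₁ ≫ kb :=
    ⟨hKb.lift _ _ hkkpf, hKb.lift_fst _ _ _, hKb.lift_snd _ _ _⟩
  -- left FPC square, by pullback stability of FPCs
  have hFleft : IsFinalPullbackComplement q₁ kb kk t₁ :=
    fpc_stab hFn square2pb hKb hK₂₁.flip hkk₂.symm hkk₁.symm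
  have hFbig : IsFinalPullbackComplement (q₁ ≫ j₁) m₂₁ kk (t₁ ≫ l) := fpc_hcomp hFL hFleft
  -- the pushout along the composite rule
  obtain ⟨mm, hmm₁, hmm₂⟩ : ∃ mm : O₂₁ ⟶ X₂, oc ≫ mm = m₂s ∧ kc ≫ mm = κb ≫ o₂' :=
    ⟨hO₂₁.desc m₂s (κb ≫ o₂') (by rw [hX₂.w, Category.assoc]), hO₂₁.inl_desc _ _ _,
      hO₂₁.inr_desc _ _ _⟩
  have squareB : IsPushout kc κb mm o₂' := by
    apply IsPushout.of_top _ hmm₂ hO₂₁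
    rw [hmm₁]
    exact hX₂
  have squareC : IsPushout q₂ kk κb t₂ :=
    (Adhesive.van_kampen square2 q₂ kk κb t₂ q₁ ν₂ t₁ n' hK₂₁ hFleft.isPullback.flip
      ⟨hFn.isPullback.w.symm⟩ ⟨hKb.w⟩ ⟨hkk₂.symm⟩).mpr ⟨hFn.isPullback.flip, hKb⟩
  have final : IsPushout (q₂ ≫ kc) kk mm (t₂ ≫ o₂') := squareC.paste_horiz squareB
  exact ⟨p₁ ≫ m₂₁, mono_comp _ _, L, κ₁ ≫ kb, l, hF1, X₁, m₁s, o₁', hX₁,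
    m₂' ≫ n, mono_comp _ _, K2b, κ₂ ≫ κb, n', hF2, X₂, m₂s, o₂', hX₂,
    Kb, kk, t₁ ≫ l, hFbig, X₂, mm, t₂ ≫ o₂', final, ⟨Iso.refl X₂⟩⟩
end
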